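/- arXiv:1405.3872 — 3 statements merged into one kernel-verified Lean document; each statement's English description precedes it below -/
import Mathlib

section
/- Let p be a prime, m, n ≥ 1, λ a unit of ZMod (p^m) with λ^(p^n) = 1, and let r be a natural number with r ≤ min m n. Then the set G_r = {(a,x) ∈ G(λ,m,n) : p^r divides a and p^r divides x} is a normal subgroup of G(λ,m,n); more precisely, it is the kernel of the surjective group homomorphism G(λ,m,n) → G(λ̄,r,r), (a,x) ↦ (a mod p^r, x mod p^r), where λ̄ denotes the image of λ in (ZMod (p^r))ˣ (which satisfies λ̄^(p^r) = 1). -/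
def IsBeauvilleStructure {G : Type*} [Group G] (x y z a b c : G) : Prop :=
  x * y * z = 1 ∧ a * b * c = 1 ∧
  Subgroup.closure {x, y, z} = ⊤ ∧ Subgroup.closure {a, b, c} = ⊤ ∧
  ∀ u ∈ ({x, y, z} : Set G), ∀ v ∈ ({a, b, c} : Set G), ∀ g : G, ∀ i j : ℤ,
    u ^ i = g * v ^ j * g⁻¹ → u ^ i = 1

/-- The homomorphism `ZMod (p^n) → (ZMod (p^m))ˣ` sending (the class of) `x` to `λ^x`,
well-defined since `λ^(p^n) = 1`. -/
def zmodUnitHom (p m n : ℕ) (lam : (ZMod (p^m))ˣ) (h : lam ^ (p^n) = 1) :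
    Multiplicative (ZMod (p^n)) →* (ZMod (p^m))ˣ :=
  AddMonoidHom.toMultiplicativeLeft
    (ZMod.lift (p^n) ⟨(zmultiplesHom (Additive (ZMod (p^m))ˣ)) (Additive.ofMul lam), by
      show ((p^n : ℕ) : ℤ) • Additive.ofMul lam = 0
      rw [← ofMul_zpow, zpow_natCast, h]
      rfl⟩)

/-- Additive automorphisms of `R` as multiplicative automorphisms of `Multiplicative R`. -/
def addAutToMulAut (R : Type*) [AddZeroClass R] :
    Multiplicative (AddAut R) →* MulAut (Multiplicative R) where
  toFun e := AddEquiv.toMultiplicative e.toAdd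
  map_one' := rfl
  map_mul' _ _ := rfl

/-- The action of `ZMod (p^n)` on `ZMod (p^m)` where `x` acts by multiplication by `λ^x`. -/
def beauvilleAut (p m n : ℕ) (lam : (ZMod (p^m))ˣ) (h : lam ^ (p^n) = 1) :
    Multiplicative (ZMod (p^n)) →* MulAut (Multiplicative (ZMod (p^m))) :=
  ((addAutToMulAut (ZMod (p^m))).comp AddAut.mulLeft).comp (zmodUnitHom p m n lam h)

/-- The semidirect product `G(λ,m,n) = ZMod (p^m) ⋊_λ ZMod (p^n)`. -/
abbrev BeauvilleGroup (p m n : ℕ) (lam : (ZMod (p^m))ˣ) (h : lam ^ (p^n) = 1) :=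
  SemidirectProduct (Multiplicative (ZMod (p^m))) (Multiplicative (ZMod (p^n)))
    (beauvilleAut p m n lam h)

lemma zmodUnitHom_int (p m n : ℕ) (lam : (ZMod (p^m))ˣ) (h : lam ^ (p^n) = 1) (k : ℤ) :
    zmodUnitHom p m n lam h (Multiplicative.ofAdd ((k : ZMod (p^n)))) = lam ^ k := by
  show Additive.toMul ((ZMod.lift (p^n) ⟨(zmultiplesHom (Additive (ZMod (p^m))ˣ)) (Additive.ofMul lam), by
      show ((p^n : ℕ) : ℤ) • Additive.ofMul lam = 0
      rw [← ofMul_zpow, zpow_natCast, h]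
      rfl⟩) (Multiplicative.toAdd (Multiplicative.ofAdd ((k : ZMod (p^n)))))) = lam ^ k
  rw [toAdd_ofAdd, ZMod.lift_coe]
  rfl

lemma beauvilleAut_apply (p m n : ℕ) (lam : (ZMod (p^m))ˣ) (h : lam ^ (p^n) = 1)
    (g : Multiplicative (ZMod (p^n))) (a : Multiplicative (ZMod (p^m))) :
    beauvilleAut p m n lam h g a =
      Multiplicative.ofAdd (((zmodUnitHom p m n lam h g : (ZMod (p^m))ˣ) : ZMod (p^m)) *
        Multiplicative.toAdd a) := rfl

lemma cast_eq_zero_iff_pow_dvd (p k r : ℕ) (hp : p.Prime) (hk : 1 ≤ k) (hrk : r ≤ k)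
    (a : ZMod (p^k)) :
    ZMod.castHom (pow_dvd_pow p hrk) (ZMod (p^r)) a = 0 ↔
      ∃ b : ZMod (p^k), a = (p : ZMod (p^k)) ^ r * b := by
  haveI : NeZero (p^k) := ⟨pow_ne_zero _ hp.ne_zero⟩
  constructor
  · intro ha
    rw [ZMod.castHom_apply, ← ZMod.natCast_val, ZMod.natCast_eq_zero_iff] at ha
    obtain ⟨t, ht⟩ := ha
    refine ⟨(t : ZMod (p^k)), ?_⟩
    conv_lhs => rw [← ZMod.natCast_zmod_val a, ht]
    push_cast
    ring
  · rintro ⟨b, rfl⟩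
    rw [map_mul, map_pow, map_natCast]
    have : ((p : ZMod (p^r)))^r = 0 := by
      rw [← Nat.cast_pow, ZMod.natCast_self]
    rw [this, zero_mul]

/-- For `r ≤ min m n`, the set `G_r` of pairs `(a,x)` with `p^r ∣ a` and
`p^r ∣ x` is the kernel of the surjective homomorphism `G(λ,m,n) → G(λ̄,r,r)` given by
componentwise reduction modulo `p^r`; in particular it is a normal subgroup. -/
theorem divisible_set_is_kernel_of_reduction
    (p m n r : ℕ) (hp : p.Prime) (hm : 1 ≤ m) (hn : 1 ≤ n) (hr : r ≤ min m n)
    (lam : (ZMod (p ^ m))ˣ) (h : lam ^ (p ^ n) = 1)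
    (lam' : (ZMod (p ^ r))ˣ)
    (hlam' : Units.map (ZMod.castHom (pow_dvd_pow p (hr.trans (min_le_left m n)))
        (ZMod (p ^ r))).toMonoidHom lam = lam')
    (h' : lam' ^ (p ^ r) = 1) :
    ∃ ψ : BeauvilleGroup p m n lam h →* BeauvilleGroup p r r lam' h',
      Function.Surjective ψ ∧
      (∀ g : BeauvilleGroup p m n lam h,
        Multiplicative.toAdd (ψ g).left =
          ZMod.castHom (pow_dvd_pow p (hr.trans (min_le_left m n))) (ZMod (p ^ r))
            (Multiplicative.toAdd g.left) ∧
        Multiplicative.toAdd (ψ g).right =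
          ZMod.castHom (pow_dvd_pow p (hr.trans (min_le_right m n))) (ZMod (p ^ r))
            (Multiplicative.toAdd g.right)) ∧
      (ψ.ker : Set (BeauvilleGroup p m n lam h)) =
        {g : BeauvilleGroup p m n lam h |
          (∃ b : ZMod (p ^ m), Multiplicative.toAdd g.left = (p : ZMod (p ^ m)) ^ r * b) ∧
          (∃ c : ZMod (p ^ n), Multiplicative.toAdd g.right = (p : ZMod (p ^ n)) ^ r * c)} := by
  haveI : NeZero (p^r) := ⟨pow_ne_zero _ hp.ne_zero⟩
  set cm := ZMod.castHom (pow_dvd_pow p (hr.trans (min_le_left m n))) (ZMod (p ^ r)) with hcm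
  set cn := ZMod.castHom (pow_dvd_pow p (hr.trans (min_le_right m n))) (ZMod (p ^ r)) with hcn
  set f₁ : Multiplicative (ZMod (p^m)) →* Multiplicative (ZMod (p^r)) :=
    AddMonoidHom.toMultiplicative cm.toAddMonoidHom with hf₁
  set f₂ : Multiplicative (ZMod (p^n)) →* Multiplicative (ZMod (p^r)) :=
    AddMonoidHom.toMultiplicative cn.toAddMonoidHom with hf₂
  have hf₁app : ∀ a : Multiplicative (ZMod (p^m)),
      Multiplicative.toAdd (f₁ a) = cm (Multiplicative.toAdd a) := fun a => rfl
  have hf₂app : ∀ a : Multiplicative (ZMod (p^n)),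
      Multiplicative.toAdd (f₂ a) = cn (Multiplicative.toAdd a) := fun a => rfl
  have hcompat : ∀ g : Multiplicative (ZMod (p^n)),
      f₁.comp (beauvilleAut p m n lam h g).toMonoidHom =
        ((beauvilleAut p r r lam' h' (f₂ g)).toMonoidHom).comp f₁ := by
    intro g
    obtain ⟨k, hk⟩ := ZMod.intCast_surjective (Multiplicative.toAdd g)
    have hg : g = Multiplicative.ofAdd ((k : ZMod (p^n))) := by
      rw [hk]; exact (ofAdd_toAdd g).symm
    subst hg
    refine MonoidHom.ext fun a => ?_
    have hf₂g : f₂ (Multiplicative.ofAdd ((k : ZMod (p^n)))) =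
        Multiplicative.ofAdd ((k : ZMod (p^r))) := by
      show Multiplicative.ofAdd (cn ((k : ZMod (p^n)))) = _
      rw [map_intCast]
    simp only [MonoidHom.comp_apply, MulEquiv.coe_toMonoidHom, hf₂g,
      beauvilleAut_apply, zmodUnitHom_int]
    show Multiplicative.ofAdd (cm _) = _
    have hcoe : cm ((lam ^ k : (ZMod (p^m))ˣ) : ZMod (p^m)) =
        ((lam' ^ k : (ZMod (p^r))ˣ) : ZMod (p^r)) := by
      rw [← hlam', ← map_zpow]
      rfl
    rw [toAdd_ofAdd, map_mul, hcoe, hf₁app]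
  refine ⟨SemidirectProduct.map f₁ f₂ hcompat, ?_, ?_, ?_⟩
  · rintro ⟨a', x'⟩
    refine ⟨⟨Multiplicative.ofAdd ((Multiplicative.toAdd a').val : ZMod (p^m)),
           Multiplicative.ofAdd ((Multiplicative.toAdd x').val : ZMod (p^n))⟩, ?_⟩
    ext
    · show f₁ _ = a'
      have : Multiplicative.toAdd (f₁ (Multiplicative.ofAdd ((Multiplicative.toAdd a').val : ZMod (p^m)))) = Multiplicative.toAdd a' := by
        rw [hf₁app, toAdd_ofAdd, map_natCast, ZMod.natCast_zmod_val]
      exact Multiplicative.toAdd.injective this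
    · show f₂ _ = x'
      have : Multiplicative.toAdd (f₂ (Multiplicative.ofAdd ((Multiplicative.toAdd x').val : ZMod (p^n)))) = Multiplicative.toAdd x' := by
        rw [hf₂app, toAdd_ofAdd, map_natCast, ZMod.natCast_zmod_val]
      exact Multiplicative.toAdd.injective this
  · intro g
    exact ⟨hf₁app g.left, hf₂app g.right⟩
  · ext g
    simp only [SetLike.mem_coe, MonoidHom.mem_ker, Set.mem_setOf_eq]
    constructor
    · intro hg
      have h1 : (SemidirectProduct.map f₁ f₂ hcompat g).left = 1 := by rw [hg]; rfl
      have h2 : (SemidirectProduct.map f₁ f₂ hcompat g).right = 1 := by rw [hg]; rfl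
      rw [SemidirectProduct.map_left] at h1
      rw [SemidirectProduct.map_right] at h2
      have h1' : cm (Multiplicative.toAdd g.left) = 0 := by
        rw [← hf₁app, h1]; rfl
      have h2' : cn (Multiplicative.toAdd g.right) = 0 := by
        rw [← hf₂app, h2]; rfl
      exact ⟨(cast_eq_zero_iff_pow_dvd p m r hp hm (hr.trans (min_le_left m n)) _).mp h1',
        (cast_eq_zero_iff_pow_dvd p n r hp hn (hr.trans (min_le_right m n)) _).mp h2'⟩
    · rintro ⟨hb, hc⟩
      have h1' : cm (Multiplicative.toAdd g.left) = 0 :=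
        (cast_eq_zero_iff_pow_dvd p m r hp hm (hr.trans (min_le_left m n)) _).mpr hb
      have h2' : cn (Multiplicative.toAdd g.right) = 0 :=
        (cast_eq_zero_iff_pow_dvd p n r hp hn (hr.trans (min_le_right m n)) _).mpr hc
      ext
      · show Multiplicative.toAdd (f₁ g.left) = Multiplicative.toAdd (1 : Multiplicative (ZMod (p^r)))
        rw [hf₁app, h1']; rfl
      · show Multiplicative.toAdd (f₂ g.right) = Multiplicative.toAdd (1 : Multiplicative (ZMod (p^r)))
        rw [hf₂app, h2']; rfl
end

section
/- Let p be an odd prime, m, n ≥ 1, and λ a unit of ZMod (p^m) with λ^(p^n) = 1. If ((x,y,z),(a,b,c)) is an unmixed Beauville structure on G(λ,m,n), then n = m and each of the six elements x, y, z, a, b, c has order exactly p^n; that is, every unmixed Beauville structure on G(λ,m,n) is balanced of constant signature p^n. -/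
open Finset Multiplicative

lemma pow_one_add_mod (p : ℕ) (D : ℤ) (j : ℕ) :
    ∃ C : ℤ, (1 + p * D)^j = 1 + j * (p * D) + p^2 * C := by
  induction j with
  | zero => exact ⟨0, by ring⟩
  | succ j ih =>
    obtain ⟨C, hC⟩ := ih
    refine ⟨C + C*p*D + j*D^2, ?_⟩
    rw [pow_succ, hC]
    push_cast
    ring

lemma geom_sum_p (p : ℕ) (hp : p.Prime) (hodd : Odd p) (V : ℤ) (hV : V ≡ 1 [ZMOD p]) :
    ∃ u : ℤ, (∑ j ∈ Finset.range p, V^j) = p * u ∧ u ≡ 1 [ZMOD p] := by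
  obtain ⟨D, hD⟩ : ∃ D : ℤ, V = 1 + p * D := by
    obtain ⟨D, hD⟩ := Int.ModEq.dvd hV.symm
    exact ⟨D, by linarith⟩
  obtain ⟨q, hq⟩ := hodd
  have key : ∀ j : ℕ, ∃ C : ℤ, V ^ j = 1 + j * (p*D) + p^2 * C := fun j => hD ▸ pow_one_add_mod p D j
  choose C hC using key
  have hsum : (∑ j ∈ Finset.range p, V^j)
      = p + (∑ j ∈ Finset.range p, (j:ℤ)) * (p*D) + p^2 * (∑ j ∈ Finset.range p, C j) := by
    rw [Finset.sum_congr rfl (fun j _ => hC j)]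
    rw [Finset.sum_add_distrib, Finset.sum_add_distrib, Finset.sum_const, Finset.card_range,
      ← Finset.sum_mul, Finset.mul_sum]
    push_cast; ring
  have hgauss : (∑ j ∈ Finset.range p, (j:ℤ)) = p * q := by
    have h1 : (∑ j ∈ Finset.range p, (j:ℕ)) * 2 = p * (p - 1) := Finset.sum_range_id_mul_two p
    have h2 := congrArg (fun k : ℕ => (k : ℤ)) h1
    have hp2 := hp.two_le
    push_cast at h2
    have hcast : ((p - 1 : ℕ) : ℤ) = (p : ℤ) - 1 := by omega
    rw [hcast] at h2
    have hq' : (p : ℤ) - 1 = 2 * q := by omega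
    rw [hq'] at h2
    linarith
  set X : ℤ := D * q + ∑ j ∈ Finset.range p, C j with hX
  refine ⟨1 + X * p, ?_, ?_⟩
  · rw [hsum, hgauss, hX]; ring
  · have hd : (p:ℤ) ∣ (1 + X * p) - 1 := ⟨X, by ring⟩
    exact (Int.modEq_iff_dvd.mpr hd).symm

lemma sum_range_mul_geom (W : ℤ) (a b : ℕ) :
    ∑ i ∈ Finset.range (a*b), W^i
      = (∑ i ∈ Finset.range a, W^i) * (∑ j ∈ Finset.range b, (W^a)^j) := by
  induction b with
  | zero => simp
  | succ b ih =>
    rw [Nat.mul_succ, Finset.sum_range_add, ih, Finset.sum_range_succ]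
    have : ∀ x ∈ Finset.range a, W ^ (a*b + x) = (W^a)^b * W^x := by
      intro x _; rw [pow_add, pow_mul]
    rw [Finset.sum_congr rfl this, ← Finset.mul_sum]
    ring

lemma geom_sum_p_pow (p : ℕ) (hp : p.Prime) (hodd : Odd p) (W : ℤ) (hW : W ≡ 1 [ZMOD p])
    (r : ℕ) : ∃ U : ℤ, (∑ i ∈ Finset.range (p^r), W^i) = p^r * U ∧ U ≡ 1 [ZMOD p] := by
  induction r with
  | zero => exact ⟨1, by simp, Int.ModEq.refl 1⟩
  | succ r ih =>
    obtain ⟨U, hU, hU1⟩ := ih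
    have hWp : W ^ (p^r) ≡ 1 [ZMOD p] := by
      calc W ^ (p^r) ≡ 1^(p^r) [ZMOD p] := Int.ModEq.pow _ hW
        _ = 1 := one_pow _
    obtain ⟨u, hu, hu1⟩ := geom_sum_p p hp hodd (W^(p^r)) hWp
    refine ⟨U * u, ?_, ?_⟩
    · rw [pow_succ, sum_range_mul_geom W (p^r) p, hU, hu]; ring
    · calc U * u ≡ 1 * 1 [ZMOD p] := Int.ModEq.mul hU1 hu1
        _ = 1 := one_mul 1

def rhoM (p m : ℕ) (hm : 1 ≤ m) : ZMod (p^m) →+* ZMod p :=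
  ZMod.castHom (dvd_pow_self p (by omega : m ≠ 0)) (ZMod p)

def rhoN (p n : ℕ) (hn : 1 ≤ n) : ZMod (p^n) →+* ZMod p :=
  ZMod.castHom (dvd_pow_self p (by omega : n ≠ 0)) (ZMod p)

def wfun (p m n : ℕ) (lam : (ZMod (p^m))ˣ) (h : lam ^ (p^n) = 1)
    (t : Multiplicative (ZMod (p^n))) : ZMod (p^m) :=
  ((zmodUnitHom p m n lam h t : (ZMod (p^m))ˣ) : ZMod (p^m))

section BV
variable {p m n : ℕ} (hp : p.Prime) (hm : 1 ≤ m) (hn : 1 ≤ n)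
  (lam : (ZMod (p^m))ˣ) (h : lam ^ (p^n) = 1)

lemma phi_apply (t : Multiplicative (ZMod (p^n))) (α : ZMod (p^m)) :
    (beauvilleAut p m n lam h) t (Multiplicative.ofAdd α)
      = Multiplicative.ofAdd ((wfun p m n lam h t) * α) := rfl

lemma chi_int (j : ℤ) :
    zmodUnitHom p m n lam h (Multiplicative.ofAdd ((j : ZMod (p^n)))) = lam ^ j := by
  unfold zmodUnitHom
  rw [AddMonoidHom.toMultiplicativeLeft]
  simp only [Equiv.coe_fn_mk, MonoidHom.coe_mk, OneHom.coe_mk]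
  change Additive.toMul (ZMod.lift (p^n) _ ((j : ZMod (p^n)))) = _
  rw [ZMod.lift_coe]
  rfl

lemma chi_eq (t : Multiplicative (ZMod (p^n))) [NeZero (p^n)] :
    zmodUnitHom p m n lam h t = lam ^ ((Multiplicative.toAdd t).val : ℤ) := by
  rw [← chi_int lam h]
  congr 1
  show t = Multiplicative.ofAdd _
  rw [Int.cast_natCast, ZMod.natCast_val, ZMod.cast_id]
  rfl

include hp hm in
lemma rho_w (t : Multiplicative (ZMod (p^n))) :
    rhoM p m hm (wfun p m n lam h t) = 1 := by
  haveI : NeZero (p^n) := ⟨pow_ne_zero _ (by have := hp.two_le; omega)⟩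
  have h1 : Units.map (rhoM p m hm).toMonoidHom (zmodUnitHom p m n lam h t) = 1 := by
    rw [chi_eq lam h t, map_zpow]
    have hone : Units.map (rhoM p m hm).toMonoidHom lam = 1 := by
      haveI : Fact p.Prime := ⟨hp⟩
      set U := Units.map (rhoM p m hm).toMonoidHom lam with hU
      have h1 : U ^ (p^n) = 1 := by rw [hU, ← map_pow, h, map_one]
      have hd1 : orderOf U ∣ p ^ n := orderOf_dvd_of_pow_eq_one h1
      have hd2 : orderOf U ∣ p - 1 := by
        have := orderOf_dvd_card (x := U)
        rwa [ZMod.card_units] at this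
      have hcop : Nat.Coprime (p^n) (p-1) := by
        apply Nat.Coprime.pow_left
        rw [Nat.Prime.coprime_iff_not_dvd hp]
        intro hdvd
        have h2 := hp.two_le
        have := Nat.le_of_dvd (by omega : 0 < p - 1) hdvd
        omega
      have h3 : orderOf U ∣ 1 := hcop ▸ Nat.dvd_gcd hd1 hd2
      rw [Nat.dvd_one] at h3
      rwa [orderOf_eq_one_iff] at h3
    rw [hone, one_zpow]
  have h2 := congrArg (Units.val) h1
  rwa [Units.coe_map] at h2

include hp hm in
lemma w_modeq (t : Multiplicative (ZMod (p^n))) :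
    (((wfun p m n lam h t).val : ℤ)) ≡ 1 [ZMOD p] := by
  haveI : NeZero (p^m) := ⟨pow_ne_zero _ (by have := hp.two_le; omega)⟩
  have h1 : (((wfun p m n lam h t).val : ℕ) : ZMod p) = 1 := by
    rw [ZMod.natCast_val]
    rw [← ZMod.castHom_apply (h := dvd_pow_self p (by omega : m ≠ 0))]
    exact rho_w hp hm lam h t
  have h2 : (((wfun p m n lam h t).val : ℤ) : ZMod p) = ((1:ℤ) : ZMod p) := by
    push_cast
    rw [h1]
  rwa [ZMod.intCast_eq_intCast_iff] at h2

lemma pow_formula (g : BeauvilleGroup p m n lam h) (r : ℕ) :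
    g ^ r = ⟨Multiplicative.ofAdd ((∑ i ∈ Finset.range r, (wfun p m n lam h g.right)^i)
        * (Multiplicative.toAdd g.left)), g.right ^ r⟩ := by
  induction r with
  | zero =>
    apply SemidirectProduct.ext <;> simp
  | succ r ih =>
    rw [pow_succ, ih]
    apply SemidirectProduct.ext
    · rw [SemidirectProduct.mul_left]
      show (Multiplicative.ofAdd _) * (beauvilleAut p m n lam h (g.right ^ r)) g.left
          = Multiplicative.ofAdd _
      have hgl : g.left = Multiplicative.ofAdd (Multiplicative.toAdd g.left) := rfl
      rw [hgl, phi_apply, ← ofAdd_add, Finset.sum_range_succ]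
      have hw : wfun p m n lam h (g.right ^ r) = (wfun p m n lam h g.right)^r := by
        unfold wfun
        rw [map_pow, Units.val_pow_eq_pow_val]
      rw [hw]
      congr 1
      simp only [toAdd_ofAdd]
      ring
    · rw [SemidirectProduct.mul_right]
      show g.right ^ r * g.right = g.right ^ (r+1)
      rw [pow_succ]
end BV

section BV2
variable {p m n : ℕ} (hp : p.Prime) (hm : 1 ≤ m) (hn : 1 ≤ n)
  (lam : (ZMod (p^m))ˣ) (h : lam ^ (p^n) = 1)

def Theta1 : BeauvilleGroup p m n lam h →* Multiplicative (ZMod p) where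
  toFun g := Multiplicative.ofAdd (rhoM p m hm (Multiplicative.toAdd g.left))
  map_one' := by simp
  map_mul' g₁ g₂ := by
    rw [SemidirectProduct.mul_left, toAdd_mul]
    have hgl : g₂.left = Multiplicative.ofAdd (Multiplicative.toAdd g₂.left) := rfl
    rw [hgl, phi_apply, toAdd_ofAdd, map_add, map_mul, rho_w hp hm lam h, one_mul, ofAdd_add]
    rfl

def Theta2 : BeauvilleGroup p m n lam h →* Multiplicative (ZMod p) :=
  (AddMonoidHom.toMultiplicative (rhoN p n hn).toAddMonoidHom).comp SemidirectProduct.rightHom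

def Theta : BeauvilleGroup p m n lam h →* Multiplicative (ZMod p × ZMod p) where
  toFun g := Multiplicative.ofAdd (rhoM p m hm (Multiplicative.toAdd g.left),
    rhoN p n hn (Multiplicative.toAdd g.right))
  map_one' := by simp
  map_mul' g₁ g₂ := by
    rw [SemidirectProduct.mul_left, SemidirectProduct.mul_right, toAdd_mul, toAdd_mul]
    have hgl : g₂.left = Multiplicative.ofAdd (Multiplicative.toAdd g₂.left) := rfl
    rw [hgl, phi_apply, toAdd_ofAdd, map_add, map_add, map_mul, rho_w hp hm lam h, one_mul]
    rfl

end BV2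

section BV3
variable {p m n : ℕ} (hp : p.Prime) (hodd : Odd p) (hm : 1 ≤ m) (hn : 1 ≤ n)
  (lam : (ZMod (p^m))ˣ) (h : lam ^ (p^n) = 1)

lemma Theta1_apply (g : BeauvilleGroup p m n lam h) :
    Theta1 hp hm lam h g = Multiplicative.ofAdd (rhoM p m hm (Multiplicative.toAdd g.left)) := rfl

lemma Theta2_apply (g : BeauvilleGroup p m n lam h) :
    Theta2 hn lam h g = Multiplicative.ofAdd (rhoN p n hn (Multiplicative.toAdd g.right)) := rfl

lemma Theta_apply (g : BeauvilleGroup p m n lam h) :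
    Theta hp hm hn lam h g = Multiplicative.ofAdd (rhoM p m hm (Multiplicative.toAdd g.left),
      rhoN p n hn (Multiplicative.toAdd g.right)) := rfl

-- if all three generators die under a hom, the hom is trivial
lemma hom_trivial {H K : Type*} [Group H] [Group K] (Θ : H →* K) (x y z : H)
    (hgen : Subgroup.closure {x, y, z} = ⊤)
    (h1 : Θ x = 1) (h2 : Θ y = 1) (h3 : Θ z = 1) : ∀ g : H, Θ g = 1 := by
  intro g
  have hsub : ({x, y, z} : Set H) ⊆ (Θ.ker : Set H) := by
    rintro u hu
    rcases hu with rfl | rfl | rfl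
    · exact h1
    · exact h2
    · exact h3
  have := Subgroup.closure_le (K := Θ.ker) (k := ({x,y,z} : Set H)) |>.mpr hsub
  rw [hgen] at this
  exact this (Subgroup.mem_top g)

-- image of everything lies in zpowers of images
lemma im_mem_zpowers {H K : Type*} [Group H] [Group K] (Θ : H →* K) (x y z : H)
    (hgen : Subgroup.closure {x, y, z} = ⊤) (c : K)
    (h1 : Θ x ∈ Subgroup.zpowers c) (h2 : Θ y ∈ Subgroup.zpowers c)
    (h3 : Θ z ∈ Subgroup.zpowers c) :
    ∀ g : H, Θ g ∈ Subgroup.zpowers c := by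
  intro g
  have hsub : ({x, y, z} : Set H) ⊆ ((Subgroup.zpowers c).comap Θ : Set H) := by
    rintro u hu
    rcases hu with rfl | rfl | rfl
    · exact h1
    · exact h2
    · exact h3
  have := Subgroup.closure_le (K := (Subgroup.zpowers c).comap Θ) |>.mpr hsub
  rw [hgen] at this
  exact this (Subgroup.mem_top g)

-- the gcd lemma
lemma exists_mul_eq (p r : ℕ) (hp : p.Prime) (hr : 1 ≤ r) (b : ZMod (p^r)) (hb : b ≠ 0) :
    ∃ c : ℤ, (c : ZMod (p^r)) * b = (p : ZMod (p^r))^(r-1) := by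
  haveI : NeZero (p^r) := ⟨pow_ne_zero _ (by have := hp.two_le; omega)⟩
  obtain ⟨d, hd⟩ : ∃ d, d = Nat.gcd b.val (p^r) := ⟨_, rfl⟩
  have hdvd : d ∣ p^r := by rw [hd]; exact Nat.gcd_dvd_right _ _
  have hbv : b.val ≠ 0 := fun hc => hb (by rwa [← ZMod.val_eq_zero])
  have hblt : b.val < p^r := ZMod.val_lt b
  have hdne : d ≠ p^r := by
    intro hc
    have hdd : p^r ∣ b.val := by
      have h0 := Nat.gcd_dvd_left b.val (p^r)
      rw [← hd, hc] at h0
      exact h0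
    have := Nat.le_of_dvd (Nat.pos_of_ne_zero hbv) hdd
    omega
  obtain ⟨j, hj_le, hdj⟩ := (Nat.dvd_prime_pow hp).mp hdvd
  have hjr : j ≤ r - 1 := by
    rcases Nat.lt_or_ge j r with hlt | hge
    · omega
    · exfalso; apply hdne; rw [hdj]; congr 1; omega
  have hbezout : (d : ℤ) = b.val * Nat.gcdA b.val (p^r) + (p^r : ℕ) * Nat.gcdB b.val (p^r) := by
    rw [hd]; exact Nat.gcd_eq_gcd_ab b.val (p^r)
  refine ⟨Nat.gcdA b.val (p^r) * p^(r-1-j), ?_⟩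
  have hb_cast : ((b.val : ℕ) : ZMod (p^r)) = b := by
    rw [ZMod.natCast_val, ZMod.cast_id]
  have hpr0 : ((p : ZMod (p^r)))^r = 0 := by
    rw [← Nat.cast_pow, ZMod.natCast_self]
  calc ((Nat.gcdA b.val (p^r) * p^(r-1-j) : ℤ) : ZMod (p^r)) * b
      = (((b.val : ℤ) * Nat.gcdA b.val (p^r) * p^(r-1-j) : ℤ) : ZMod (p^r)) := by
        push_cast
        rw [hb_cast]
        ring
    _ = (((d : ℤ) - (p^r : ℕ) * Nat.gcdB b.val (p^r)) * p^(r-1-j) : ℤ) := by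
        rw [show ((b.val : ℤ)) * Nat.gcdA b.val (p^r) = (d : ℤ) - (p^r:ℕ) * Nat.gcdB b.val (p^r) from by omega]
    _ = ((d * p^(r-1-j) : ℤ) : ZMod (p^r)) := by
        push_cast
        rw [hpr0]
        ring
    _ = (p : ZMod (p^r))^(r-1) := by
        rw [hdj]
        push_cast
        rw [← pow_add]
        congr 1
        omega

end BV3

section BV4
variable {p m n : ℕ} (hp : p.Prime) (hodd : Odd p) (hm : 1 ≤ m) (hn : 1 ≤ n)
  (lam : (ZMod (p^m))ˣ) (h : lam ^ (p^n) = 1)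

include hp hodd hm in
lemma pow_p_pow (g : BeauvilleGroup p m n lam h) (r : ℕ) :
    ∃ U : ℤ, U ≡ 1 [ZMOD p] ∧
      g ^ (p^r) = ⟨Multiplicative.ofAdd ((((p:ℤ)^r * U : ℤ) : ZMod (p^m))
        * Multiplicative.toAdd g.left), g.right ^ (p^r)⟩ := by
  obtain ⟨U, hU, hU1⟩ := geom_sum_p_pow p hp hodd ((wfun p m n lam h g.right).val : ℤ)
    (w_modeq hp hm lam h g.right) r
  haveI : NeZero (p^m) := ⟨pow_ne_zero _ (by have := hp.two_le; omega)⟩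
  refine ⟨U, hU1, ?_⟩
  rw [pow_formula]
  apply SemidirectProduct.ext
  · show Multiplicative.ofAdd _ = Multiplicative.ofAdd _
    congr 1
    have hcast := congrArg (fun z : ℤ => ((z : ZMod (p^m)))) hU
    push_cast at hcast
    rw [ZMod.natCast_val, ZMod.cast_id] at hcast
    rw [hcast]
    push_cast
    ring
  · rfl

-- the right coordinate has exponent p^n
lemma right_exp (t : Multiplicative (ZMod (p^n))) : t ^ (p^n) = 1 := by
  apply Multiplicative.toAdd.injective
  rw [toAdd_pow, nsmul_eq_mul, ZMod.natCast_self, zero_mul]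
  rfl

include hp hn in
lemma right_pow_ne (t : Multiplicative (ZMod (p^n)))
    (ht : rhoN p n hn (Multiplicative.toAdd t) ≠ 0) (r : ℕ) (hr : r < n) :
    t ^ (p^r) ≠ 1 := by
  intro hcon
  apply ht
  haveI : NeZero (p^n) := ⟨pow_ne_zero _ (by have := hp.two_le; omega)⟩
  haveI : NeZero p := ⟨by have := hp.two_le; omega⟩
  have h0 := congrArg Multiplicative.toAdd hcon
  rw [toAdd_pow, nsmul_eq_mul] at h0
  have h1 : ((p^r * (Multiplicative.toAdd t).val : ℕ) : ZMod (p^n)) = 0 := by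
    push_cast at h0 ⊢
    rw [ZMod.natCast_val, ZMod.cast_id]
    rw [h0]
    rfl
  rw [ZMod.natCast_eq_zero_iff] at h1
  have h2 : p ∣ (Multiplicative.toAdd t).val := by
    have hfac : p^r * p^(n-r) = p^n := by rw [← pow_add]; congr 1; omega
    have h1' : p^r * p^(n-r) ∣ p^r * (Multiplicative.toAdd t).val := by rw [hfac]; exact h1
    have h3 := (Nat.mul_dvd_mul_iff_left (pow_pos (by have := hp.two_le; omega) r)).mp h1'
    exact dvd_trans (dvd_pow_self p (by omega : n - r ≠ 0)) h3
  have h4 : rhoN p n hn (Multiplicative.toAdd t) = (((Multiplicative.toAdd t).val : ℕ) : ZMod p) := by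
    rw [ZMod.natCast_val]
    rfl
  rw [h4, ZMod.natCast_eq_zero_iff]
  exact h2

end BV4

section BV5
variable {p m n : ℕ} (hp : p.Prime) (hodd : Odd p) (hm : 1 ≤ m) (hn : 1 ≤ n)
  (lam : (ZMod (p^m))ˣ) (h : lam ^ (p^n) = 1)

include hp in
lemma int_prime : Prime (p : ℤ) := by
  rw [Int.prime_iff_natAbs_prime]; simpa using hp

include hp in
lemma not_dvd_of_modeq_one (U : ℤ) (hU : U ≡ 1 [ZMOD p]) : ¬ (p:ℤ) ∣ U := by
  intro hd
  have h0 : (0:ℤ) ≡ U [ZMOD p] := (Int.modEq_zero_iff_dvd.mpr hd).symm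
  have h1 : (0:ℤ) ≡ 1 [ZMOD p] := h0.trans hU
  have h2 : (p:ℤ) ∣ 1 - 0 := h1.dvd
  simp only [sub_zero] at h2
  have := Int.le_of_dvd one_pos h2
  have := hp.two_le
  omega

include hp hm in
lemma NV1 {r : ℕ} (K : ℤ) (hK : ¬ (p:ℤ) ∣ K) (hr : r < m) :
    (((p:ℤ)^r * K : ℤ) : ZMod (p^m)) ≠ 0 := by
  haveI : NeZero (p^m) := ⟨pow_ne_zero _ (by have := hp.two_le; omega)⟩
  intro h0
  rw [ZMod.intCast_zmod_eq_zero_iff_dvd] at h0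
  apply hK
  have hfac : ((p:ℤ))^r * (p:ℤ)^(m-r) = ((p^m : ℕ) : ℤ) := by
    push_cast
    rw [← pow_add]
    congr 1
    omega
  rw [← hfac] at h0
  have hpne : ((p:ℤ))^r ≠ 0 := pow_ne_zero _ (by have := hp.two_le; exact_mod_cast (by omega : (p:ℤ) ≠ 0))
  have h3 := (mul_dvd_mul_iff_left hpne).mp h0
  exact dvd_trans (dvd_pow_self (p:ℤ) (by omega : m - r ≠ 0)) h3

lemma NV2 {r : ℕ} (K : ℤ) (hr : m ≤ r) : (((p:ℤ)^r * K : ℤ) : ZMod (p^m)) = 0 := by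
  rw [ZMod.intCast_zmod_eq_zero_iff_dvd]
  apply Dvd.dvd.mul_right
  push_cast
  exact pow_dvd_pow (p:ℤ) hr

include hp hm in
lemma theta1_val (g : BeauvilleGroup p m n lam h) (hg : Theta1 hp hm lam h g ≠ 1) :
    ¬ p ∣ (Multiplicative.toAdd g.left).val := by
  haveI : NeZero (p^m) := ⟨pow_ne_zero _ (by have := hp.two_le; omega)⟩
  haveI : NeZero p := ⟨by have := hp.two_le; omega⟩
  intro hd
  apply hg
  rw [Theta1_apply]
  have h1 : (((Multiplicative.toAdd g.left).val : ℕ) : ZMod p) = 0 :=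
    (ZMod.natCast_eq_zero_iff _ _).mpr hd
  rw [ZMod.natCast_val] at h1
  have h2 : rhoM p m hm (Multiplicative.toAdd g.left) = 0 := by
    rw [rhoM, ZMod.castHom_apply]
    exact h1
  rw [h2]
  rfl

-- main "power hits the deep central element" lemma for n < m
include hp hodd hm hn in
lemma key_lt (hlt : n < m) (u : BeauvilleGroup p m n lam h)
    (hu : Theta1 hp hm lam h u ≠ 1) :
    ∃ i : ℤ, u ^ i = SemidirectProduct.inl (Multiplicative.ofAdd ((p : ZMod (p^m))^(m-1))) := by
  haveI : NeZero (p^m) := ⟨pow_ne_zero _ (by have := hp.two_le; omega)⟩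
  obtain ⟨U, hU1, hUeq⟩ := pow_p_pow hp hodd hm lam h u n
  set aL := Multiplicative.toAdd u.left with haL
  have hval : ¬ p ∣ aL.val := theta1_val hp hm lam h u hu
  set b := (((p:ℤ)^n * U : ℤ) : ZMod (p^m)) * aL with hb
  have hb2 : b = (((p:ℤ)^n * (U * aL.val) : ℤ) : ZMod (p^m)) := by
    rw [hb]
    push_cast
    rw [ZMod.natCast_val, ZMod.cast_id]
    ring
  have hKnd : ¬ (p:ℤ) ∣ (U * aL.val) := by
    intro hd
    rcases (int_prime (p := p) hp).dvd_mul.mp hd with hd1 | hd2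
    · exact not_dvd_of_modeq_one hp U hU1 hd1
    · exact hval (by exact_mod_cast hd2)
  have hbne : b ≠ 0 := by
    rw [hb2]
    exact NV1 hp hm _ hKnd hlt
  have hpow : u ^ (p^n) = SemidirectProduct.inl (Multiplicative.ofAdd b) := by
    rw [hUeq]
    apply SemidirectProduct.ext
    · rw [SemidirectProduct.left_inl]
    · rw [SemidirectProduct.right_inl]
      exact right_exp u.right
  obtain ⟨cc, hcc⟩ := exists_mul_eq p m hp hm b hbne
  refine ⟨(p^n : ℕ) * cc, ?_⟩
  rw [zpow_mul, zpow_natCast, hpow, ← map_zpow]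
  congr 1
  apply Multiplicative.toAdd.injective
  rw [toAdd_zpow, toAdd_ofAdd, toAdd_ofAdd, zsmul_eq_mul]
  exact hcc

-- main lemma for n > m
include hp hodd hm hn in
lemma key_gt (hgt : m < n) (u : BeauvilleGroup p m n lam h)
    (hu : Theta2 hn lam h u ≠ 1) :
    ∃ i : ℤ, u ^ i = SemidirectProduct.inr
      (φ := beauvilleAut p m n lam h) (Multiplicative.ofAdd ((p : ZMod (p^n))^(n-1))) := by
  haveI : NeZero (p^n) := ⟨pow_ne_zero _ (by have := hp.two_le; omega)⟩
  obtain ⟨U, hU1, hUeq⟩ := pow_p_pow hp hodd hm lam h u (n-1)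
  have hρ : rhoN p n hn (Multiplicative.toAdd u.right) ≠ 0 := by
    intro h0
    apply hu
    rw [Theta2_apply, h0]
    rfl
  set s := u.right ^ (p^(n-1)) with hs
  have hsne : s ≠ 1 := right_pow_ne hp hn u.right hρ (n-1) (by omega)
  have hpow : u ^ (p^(n-1)) = SemidirectProduct.inr s := by
    rw [hUeq]
    apply SemidirectProduct.ext
    · rw [SemidirectProduct.left_inr]
      rw [NV2 (m := m) _ (by omega : m ≤ n - 1), zero_mul]
      rfl
    · rw [SemidirectProduct.right_inr]
  have hbne : Multiplicative.toAdd s ≠ 0 := by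
    intro h0
    exact hsne (Multiplicative.toAdd.injective h0)
  obtain ⟨cc, hcc⟩ := exists_mul_eq p n hp hn (Multiplicative.toAdd s) hbne
  refine ⟨(p^(n-1) : ℕ) * cc, ?_⟩
  rw [zpow_mul, zpow_natCast, hpow, ← map_zpow]
  congr 1
  apply Multiplicative.toAdd.injective
  rw [toAdd_zpow, toAdd_ofAdd, zsmul_eq_mul]
  exact hcc

end BV5

section BV6
variable {p m n : ℕ} (hp : p.Prime) (hodd : Odd p) (hm : 1 ≤ m) (hn : 1 ≤ n)
  (lam : (ZMod (p^m))ˣ) (h : lam ^ (p^n) = 1)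

include hp hodd hm hn in
lemma order_lemma (heq : n = m) (g : BeauvilleGroup p m n lam h)
    (hg : Theta hp hm hn lam h g ≠ 1) : orderOf g = p ^ n := by
  haveI : Fact p.Prime := ⟨hp⟩
  haveI : NeZero (p^m) := ⟨pow_ne_zero _ (by have := hp.two_le; omega)⟩
  have hpow : g ^ (p^n) = 1 := by
    obtain ⟨U, hU1, hUeq⟩ := pow_p_pow hp hodd hm lam h g n
    rw [hUeq]
    apply SemidirectProduct.ext
    · rw [SemidirectProduct.one_left, NV2 (m := m) _ (by omega : m ≤ n), zero_mul]
      rfl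
    · rw [SemidirectProduct.one_right]
      exact right_exp g.right
  have hnot : g ^ (p^(n-1)) ≠ 1 := by
    by_cases hc : rhoN p n hn (Multiplicative.toAdd g.right) = 0
    · -- left coordinate is a unit
      have hM : Theta1 hp hm lam h g ≠ 1 := by
        intro h0
        apply hg
        rw [Theta_apply]
        have h1 : rhoM p m hm (Multiplicative.toAdd g.left) = 0 := by
          have := congrArg Multiplicative.toAdd h0
          rw [Theta1_apply] at this
          exact this
        rw [h1, hc]
        rfl
      have hval : ¬ p ∣ (Multiplicative.toAdd g.left).val := theta1_val hp hm lam h g hM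
      intro hcon
      obtain ⟨U, hU1, hUeq⟩ := pow_p_pow hp hodd hm lam h g (n-1)
      rw [hUeq] at hcon
      have hleft := congrArg SemidirectProduct.left hcon
      rw [SemidirectProduct.one_left] at hleft
      have hX : ((((p:ℤ)^(n-1) * U : ℤ) : ZMod (p^m)) * Multiplicative.toAdd g.left) = 0 := by
        have := congrArg Multiplicative.toAdd hleft
        exact this
      have hb2 : (((p:ℤ)^(n-1) * U : ℤ) : ZMod (p^m)) * Multiplicative.toAdd g.left
          = (((p:ℤ)^(n-1) * (U * (Multiplicative.toAdd g.left).val) : ℤ) : ZMod (p^m)) := by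
        push_cast
        rw [ZMod.natCast_val, ZMod.cast_id]
        ring
      rw [hb2] at hX
      apply NV1 hp hm (U * (Multiplicative.toAdd g.left).val) ?_ (by omega : n - 1 < m) hX
      intro hd
      rcases (int_prime (p := p) hp).dvd_mul.mp hd with hd1 | hd2
      · exact not_dvd_of_modeq_one hp U hU1 hd1
      · exact hval (by exact_mod_cast hd2)
    · -- right coordinate nontrivial
      intro hcon
      apply right_pow_ne hp hn g.right hc (n-1) (by omega)
      have := congrArg (SemidirectProduct.rightHom) hcon
      rw [map_pow, map_one] at this
      rw [SemidirectProduct.rightHom_eq_right] at this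
      exact this
  have hfin : g ^ (p^(n-1+1)) = 1 := by
    rw [show n-1+1 = n from by omega]
    exact hpow
  have := orderOf_eq_prime_pow hnot hfin
  rw [show n-1+1 = n from by omega] at this
  exact this

include hp hm hn in
lemma three_ne_one (x y z : BeauvilleGroup p m n lam h)
    (hxyz : x * y * z = 1) (hgen : Subgroup.closure {x, y, z} = ⊤) :
    ∀ u ∈ ({x, y, z} : Set (BeauvilleGroup p m n lam h)), Theta hp hm hn lam h u ≠ 1 := by
  haveI : Fact p.Prime := ⟨hp⟩
  set Θ := Theta hp hm hn lam h with hΘ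
  have hmul : Θ x * Θ y * Θ z = 1 := by rw [← map_mul, ← map_mul, hxyz, map_one]
  intro u hu h1
  -- produce c with all images in zpowers c
  obtain ⟨c, hcx, hcy, hcz⟩ : ∃ c, Θ x ∈ Subgroup.zpowers c ∧ Θ y ∈ Subgroup.zpowers c
      ∧ Θ z ∈ Subgroup.zpowers c := by
    rcases hu with rfl | rfl | rfl
    · refine ⟨Θ y, ?_, Subgroup.mem_zpowers _, ?_⟩
      · rw [h1]; exact Subgroup.one_mem _
      · rw [h1, one_mul] at hmul
        rw [(mul_eq_one_iff_inv_eq.mp hmul).symm]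
        exact Subgroup.inv_mem _ (Subgroup.mem_zpowers _)
    · refine ⟨Θ x, Subgroup.mem_zpowers _, ?_, ?_⟩
      · rw [h1]; exact Subgroup.one_mem _
      · rw [h1, mul_one] at hmul
        rw [(mul_eq_one_iff_inv_eq.mp hmul).symm]
        exact Subgroup.inv_mem _ (Subgroup.mem_zpowers _)
    · refine ⟨Θ x, Subgroup.mem_zpowers _, ?_, ?_⟩
      · rw [h1, mul_one] at hmul
        rw [(mul_eq_one_iff_inv_eq.mp hmul).symm]
        exact Subgroup.inv_mem _ (Subgroup.mem_zpowers _)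
      · rw [h1]; exact Subgroup.one_mem _
  have hall := im_mem_zpowers Θ x y z hgen c hcx hcy hcz
  -- two specific elements
  have he1 : Θ (SemidirectProduct.inl (Multiplicative.ofAdd (1 : ZMod (p^m))))
      = Multiplicative.ofAdd ((1 : ZMod p), (0 : ZMod p)) := by
    rw [hΘ, Theta_apply]
    rw [SemidirectProduct.left_inl, SemidirectProduct.right_inl]
    have : rhoM p m hm (1 : ZMod (p^m)) = 1 := map_one _
    rw [show Multiplicative.toAdd (Multiplicative.ofAdd (1 : ZMod (p^m))) = (1 : ZMod (p^m)) from rfl]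
    rw [this]
    rw [show Multiplicative.toAdd (1 : Multiplicative (ZMod (p^n))) = (0 : ZMod (p^n)) from rfl]
    rw [map_zero]
  have he2 : Θ (SemidirectProduct.inr (φ := beauvilleAut p m n lam h)
        (Multiplicative.ofAdd (1 : ZMod (p^n))))
      = Multiplicative.ofAdd ((0 : ZMod p), (1 : ZMod p)) := by
    rw [hΘ, Theta_apply]
    rw [SemidirectProduct.left_inr, SemidirectProduct.right_inr]
    rw [show Multiplicative.toAdd (1 : Multiplicative (ZMod (p^m))) = (0 : ZMod (p^m)) from rfl]
    rw [map_zero]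
    rw [show Multiplicative.toAdd (Multiplicative.ofAdd (1 : ZMod (p^n))) = (1 : ZMod (p^n)) from rfl]
    rw [map_one]
  obtain ⟨k1, hk1⟩ := Subgroup.mem_zpowers_iff.mp (he1 ▸ hall (SemidirectProduct.inl (Multiplicative.ofAdd (1 : ZMod (p^m)))))
  obtain ⟨k2, hk2⟩ := Subgroup.mem_zpowers_iff.mp (he2 ▸ hall (SemidirectProduct.inr (Multiplicative.ofAdd (1 : ZMod (p^n)))))
  set v := Multiplicative.toAdd c with hv
  have ha1 : k1 • v = ((1 : ZMod p), (0 : ZMod p)) := by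
    have := congrArg Multiplicative.toAdd hk1
    rwa [toAdd_zpow] at this
  have ha2 : k2 • v = ((0 : ZMod p), (1 : ZMod p)) := by
    have := congrArg Multiplicative.toAdd hk2
    rwa [toAdd_zpow] at this
  have hcomm : k2 • (k1 • v) = k1 • (k2 • v) := smul_comm k2 k1 v
  rw [ha1, ha2, Prod.smul_mk, Prod.smul_mk, smul_zero, smul_zero] at hcomm
  have hk2z : (k2 : ZMod p) = 0 := by
    have := congrArg Prod.fst hcomm
    simpa [zsmul_eq_mul] using this
  have hk1z : (k1 : ZMod p) = 0 := by
    have := congrArg Prod.snd hcomm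
    simpa [zsmul_eq_mul] using this.symm
  -- then (1,0) = k1 • v = 0
  have hzero : k1 • v = 0 := by
    have : k1 • v = ((k1 : ZMod p) * v.1, (k1 : ZMod p) * v.2) := by
      cases v
      rw [Prod.smul_mk, zsmul_eq_mul, zsmul_eq_mul]
    rw [this, hk1z, zero_mul, zero_mul]
    rfl
  rw [ha1] at hzero
  have : (1 : ZMod p) = 0 := congrArg Prod.fst hzero
  exact one_ne_zero this

end BV6

section BV7
variable {p m n : ℕ} (hp : p.Prime) (hodd : Odd p) (hm : 1 ≤ m) (hn : 1 ≤ n)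
  (lam : (ZMod (p^m))ˣ) (h : lam ^ (p^n) = 1)

include hp hm in
lemma exists_theta1 (x y z : BeauvilleGroup p m n lam h)
    (hgen : Subgroup.closure {x, y, z} = ⊤) :
    ∃ u ∈ ({x, y, z} : Set (BeauvilleGroup p m n lam h)), Theta1 hp hm lam h u ≠ 1 := by
  haveI : Fact p.Prime := ⟨hp⟩
  by_contra hcon
  push_neg at hcon
  have hall := hom_trivial (Theta1 hp hm lam h) x y z hgen
    (hcon x (by simp)) (hcon y (by simp)) (hcon z (by simp))
  have hx := hall (SemidirectProduct.inl (Multiplicative.ofAdd (1 : ZMod (p^m))))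
  rw [Theta1_apply, SemidirectProduct.left_inl] at hx
  have h2 : rhoM p m hm (1 : ZMod (p^m)) = 0 := congrArg Multiplicative.toAdd hx
  rw [map_one] at h2
  exact one_ne_zero h2

include hp hn in
lemma exists_theta2 (x y z : BeauvilleGroup p m n lam h)
    (hgen : Subgroup.closure {x, y, z} = ⊤) :
    ∃ u ∈ ({x, y, z} : Set (BeauvilleGroup p m n lam h)), Theta2 hn lam h u ≠ 1 := by
  haveI : Fact p.Prime := ⟨hp⟩
  by_contra hcon
  push_neg at hcon
  have hall := hom_trivial (Theta2 hn lam h) x y z hgen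
    (hcon x (by simp)) (hcon y (by simp)) (hcon z (by simp))
  have hx := hall (SemidirectProduct.inr (Multiplicative.ofAdd (1 : ZMod (p^n))))
  rw [Theta2_apply, SemidirectProduct.right_inr] at hx
  have h2 : rhoN p n hn (1 : ZMod (p^n)) = 0 := congrArg Multiplicative.toAdd hx
  rw [map_one] at h2
  exact one_ne_zero h2

end BV7


/-- For odd `p`, any unmixed Beauville structure on `G(λ,m,n)` forces `n = m`
and is balanced of constant signature `p^n`. -/
theorem beauville_on_semidirect_is_balanced
    (p m n : ℕ) (hp : p.Prime) (hodd : Odd p) (hm : 1 ≤ m) (hn : 1 ≤ n)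
    (lam : (ZMod (p ^ m))ˣ) (h : lam ^ (p ^ n) = 1)
    (x y z a b c : BeauvilleGroup p m n lam h)
    (hB : IsBeauvilleStructure x y z a b c) :
    n = m ∧ orderOf x = p ^ n ∧ orderOf y = p ^ n ∧ orderOf z = p ^ n ∧
      orderOf a = p ^ n ∧ orderOf b = p ^ n ∧ orderOf c = p ^ n := by
  obtain ⟨hxyz, habc, hgenx, hgena, hcond⟩ := hB
  haveI : NeZero (p^m) := ⟨pow_ne_zero _ (by have := hp.two_le; omega)⟩
  haveI : NeZero (p^n) := ⟨pow_ne_zero _ (by have := hp.two_le; omega)⟩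
  rcases lt_trichotomy n m with hlt | heq | hgt
  · exfalso
    obtain ⟨u, hu, hΘu⟩ := exists_theta1 hp hm lam h x y z hgenx
    obtain ⟨v, hv, hΘv⟩ := exists_theta1 hp hm lam h a b c hgena
    obtain ⟨i, hi⟩ := key_lt hp hodd hm hn lam h hlt u hΘu
    obtain ⟨j, hj⟩ := key_lt hp hodd hm hn lam h hlt v hΘv
    have hcontr := hcond u hu v hv 1 i j (by rw [hi, hj]; group)
    rw [hi] at hcontr
    have h2 : Multiplicative.ofAdd ((p : ZMod (p^m))^(m-1))
        = (1 : Multiplicative (ZMod (p^m))) := by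
      apply SemidirectProduct.inl_injective (φ := beauvilleAut p m n lam h)
      rw [hcontr, map_one]
    have h3 : ((p : ZMod (p^m))^(m-1)) = 0 := congrArg Multiplicative.toAdd h2
    rw [← Nat.cast_pow, ZMod.natCast_eq_zero_iff,
      Nat.pow_dvd_pow_iff_le_right hp.one_lt] at h3
    omega
  · refine ⟨heq, ?_, ?_, ?_, ?_, ?_, ?_⟩
    · exact order_lemma hp hodd hm hn lam h heq x
        (three_ne_one hp hm hn lam h x y z hxyz hgenx x (by simp))
    · exact order_lemma hp hodd hm hn lam h heq y
        (three_ne_one hp hm hn lam h x y z hxyz hgenx y (by simp))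
    · exact order_lemma hp hodd hm hn lam h heq z
        (three_ne_one hp hm hn lam h x y z hxyz hgenx z (by simp))
    · exact order_lemma hp hodd hm hn lam h heq a
        (three_ne_one hp hm hn lam h a b c habc hgena a (by simp))
    · exact order_lemma hp hodd hm hn lam h heq b
        (three_ne_one hp hm hn lam h a b c habc hgena b (by simp))
    · exact order_lemma hp hodd hm hn lam h heq c
        (three_ne_one hp hm hn lam h a b c habc hgena c (by simp))
  · exfalso
    obtain ⟨u, hu, hΘu⟩ := exists_theta2 hp hn lam h x y z hgenx
    obtain ⟨v, hv, hΘv⟩ := exists_theta2 hp hn lam h a b c hgena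
    obtain ⟨i, hi⟩ := key_gt hp hodd hm hn lam h hgt u hΘu
    obtain ⟨j, hj⟩ := key_gt hp hodd hm hn lam h hgt v hΘv
    have hcontr := hcond u hu v hv 1 i j (by rw [hi, hj]; group)
    rw [hi] at hcontr
    have h2 : Multiplicative.ofAdd ((p : ZMod (p^n))^(n-1))
        = (1 : Multiplicative (ZMod (p^n))) := by
      apply SemidirectProduct.inr_injective (φ := beauvilleAut p m n lam h)
      rw [hcontr, map_one]
    have h3 : ((p : ZMod (p^n))^(n-1)) = 0 := congrArg Multiplicative.toAdd h2
    rw [← Nat.cast_pow, ZMod.natCast_eq_zero_iff,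
      Nat.pow_dvd_pow_iff_le_right hp.one_lt] at h3
    omega
end

section
/- Let p be an odd prime, n ≥ 1, and λ a unit of ZMod (p^n) with λ^(p^n) = 1; let G = G(λ,n,n) and let π : G → G/Φ(G) be the quotient map by the Frattini subgroup. Let x, y, z, a, b, c ∈ G satisfy x*y*z = 1 and a*b*c = 1. Then ((x,y,z),(a,b,c)) is an unmixed Beauville structure on G if and only if ((π x, π y, π z),(π a, π b, π c)) is an unmixed Beauville structure on G/Φ(G). -/
open Finset Multiplicative

private lemma int_sq_dvd (c : ℤ) (m : ℕ) : c ^ 2 ∣ (1 + c) ^ m - (1 + m * c) := by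
  induction m with
  | zero => simp
  | succ k ih =>
    obtain ⟨d, hd⟩ := ih
    refine ⟨d * (1 + c) + k, ?_⟩
    push_cast
    linear_combination (1 + c) * hd

private lemma int_geom_mul (μ : ℤ) (a b : ℕ) :
    (∑ i ∈ range (a * b), μ ^ i) = (∑ i ∈ range a, μ ^ i) * (∑ k ∈ range b, (μ ^ a) ^ k) := by
  induction b with
  | zero => simp
  | succ k ih =>
    rw [Nat.mul_succ, Finset.sum_range_add, ih, Finset.sum_range_succ, mul_add]
    congr 1
    rw [Finset.sum_mul]
    apply Finset.sum_congr rfl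
    intro i _
    rw [pow_add, pow_mul]
    ring

private lemma int_gauss (p : ℕ) (s : ℕ) (hs : p = 2 * s + 1) :
    (∑ k ∈ range p, (k : ℤ)) = p * s := by
  have h := Finset.sum_range_id_mul_two p
  have h2 : (∑ k ∈ range p, (k : ℕ)) * 2 = p * (2 * s) := by rw [h, hs]; simp
  have h3 : (∑ k ∈ range p, (k : ℤ)) * 2 = (p : ℤ) * (2 * s) := by
    have := congrArg (Nat.cast (R := ℤ)) h2
    push_cast at this ⊢
    linarith
  have : ((∑ k ∈ range p, (k : ℤ)) - p * s) * 2 = 0 := by ring_nf; linarith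
  have h4 := mul_eq_zero.mp this
  rcases h4 with h4 | h4
  · linarith
  · norm_num at h4

private lemma int_key (p : ℕ) (hp : p.Prime) (hodd : Odd p) {μ : ℤ} (hμ : (p : ℤ) ∣ μ - 1) :
    ∀ t : ℕ, ((p : ℤ) ^ (t + 1) ∣ μ ^ p ^ t - 1) ∧
      ((p : ℤ) ^ (t + 1) ∣ (∑ i ∈ range (p ^ t), μ ^ i) - p ^ t) := by
  intro t
  induction t with
  | zero =>
    constructor
    · simpa using hμ
    · simp
  | succ t ih =>
    obtain ⟨⟨e, he⟩, ⟨f, hf⟩⟩ := ih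
    obtain ⟨s, hs⟩ := hodd
    have hν : μ ^ p ^ t = 1 + (p : ℤ) ^ (t + 1) * e := by linarith [he]
    set c : ℤ := (p : ℤ) ^ (t + 1) * e with hc
    -- T = ∑_{k<p} (μ^{p^t})^k = p + p^{t+2} * W
    obtain ⟨D, hD⟩ : c ^ 2 ∣ (∑ k ∈ range p, (μ ^ p ^ t) ^ k) - (∑ k ∈ range p, (1 + k * c)) := by
      rw [← Finset.sum_sub_distrib]
      apply Finset.dvd_sum
      intro k _
      rw [hν]
      exact int_sq_dvd c k
    have hsum1 : (∑ k ∈ range p, (1 + (k : ℤ) * c)) = p + (p * s) * c := by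
      rw [Finset.sum_add_distrib]
      simp only [Finset.sum_const, Finset.card_range, nsmul_eq_mul, mul_one]
      rw [← Finset.sum_mul, int_gauss p s hs]
    have hT : (∑ k ∈ range p, (μ ^ p ^ t) ^ k)
        = p + (p : ℤ) ^ (t + 2) * (e * s + (p : ℤ) ^ t * e ^ 2 * D) := by
      have : (∑ k ∈ range p, (μ ^ p ^ t) ^ k) = p + (p * s) * c + c ^ 2 * D := by
        rw [← hsum1]; linarith [hD]
      rw [this, hc]
      ring
    constructor
    · obtain ⟨d, hd⟩ := int_sq_dvd c p
      refine ⟨e + (p : ℤ) ^ t * e ^ 2 * d, ?_⟩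
      have h1 : μ ^ p ^ (t + 1) = (1 + c) ^ p := by
        rw [← hν, ← pow_mul, pow_succ]
      rw [h1]
      have : (1 + c) ^ p = 1 + (p : ℤ) * c + c ^ 2 * d := by linarith [hd]
      rw [this, hc]
      ring
    · refine ⟨(p:ℤ) ^ t * (e * s + (p : ℤ) ^ t * e ^ 2 * D)
        + f + (p:ℤ) * f * (e * s + (p : ℤ) ^ t * e ^ 2 * D) * (p:ℤ) ^ t, ?_⟩
      have hsplit : (∑ i ∈ range (p ^ (t + 1)), μ ^ i)
          = (∑ i ∈ range (p ^ t), μ ^ i) * (∑ k ∈ range p, (μ ^ p ^ t) ^ k) := by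
        rw [← int_geom_mul, pow_succ]
      rw [hsplit, hT]
      have hS : (∑ i ∈ range (p ^ t), μ ^ i) = (p : ℤ) ^ t + (p : ℤ) ^ (t + 1) * f := by
        linarith [hf]
      rw [hS]
      push_cast
      ring

private lemma int_key_p (p : ℕ) (hodd : Odd p) {μ : ℤ} (hμ : (p : ℤ) ∣ μ - 1) :
    ∃ W : ℤ, (∑ i ∈ range p, μ ^ i) = p * (1 + p * W) := by
  obtain ⟨m, hm⟩ := hμ
  obtain ⟨s, hs⟩ := hodd
  have hμ1 : μ = 1 + (p : ℤ) * m := by linarith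
  obtain ⟨D, hD⟩ : ((p : ℤ) * m) ^ 2 ∣ (∑ k ∈ range p, μ ^ k) - (∑ k ∈ range p, (1 + k * ((p:ℤ) * m))) := by
    rw [← Finset.sum_sub_distrib]
    apply Finset.dvd_sum
    intro k _
    rw [hμ1]
    exact int_sq_dvd _ k
  have hsum1 : (∑ k ∈ range p, (1 + (k : ℤ) * ((p:ℤ) * m))) = p + (p * s) * ((p:ℤ) * m) := by
    rw [Finset.sum_add_distrib]
    simp only [Finset.sum_const, Finset.card_range, nsmul_eq_mul, mul_one]
    rw [← Finset.sum_mul, int_gauss p s hs]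
  refine ⟨s * m + m ^ 2 * D, ?_⟩
  have : (∑ k ∈ range p, μ ^ k) = p + (p * s) * ((p:ℤ) * m) + ((p:ℤ) * m) ^ 2 * D := by
    rw [← hsum1]; linarith [hD]
  rw [this]
  ring

open Finset Multiplicative Subgroup

namespace BeauvilleAux

variable (p n : ℕ) (lam : (ZMod (p^n))ˣ) (h : lam ^ (p^n) = 1)

/-- coordinates -/
def el (a x : ZMod (p^n)) : BeauvilleGroup p n n lam h :=
  ⟨Multiplicative.ofAdd a, Multiplicative.ofAdd x⟩

/-- λ^x as a unit -/
def Uu (x : ZMod (p^n)) : (ZMod (p^n))ˣ := zmodUnitHom p n n lam h (Multiplicative.ofAdd x)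

lemma el_mul (a x b y : ZMod (p^n)) :
    el p n lam h a x * el p n lam h b y
      = el p n lam h (a + (Uu p n lam h x : ZMod (p^n)) * b) (x + y) := rfl

lemma el_eq_iff {a x b y : ZMod (p^n)} :
    el p n lam h a x = el p n lam h b y ↔ a = b ∧ x = y := by
  constructor
  · intro hab
    have h1 := congrArg SemidirectProduct.left hab
    have h2 := congrArg SemidirectProduct.right hab
    exact ⟨ofAdd.injective h1, ofAdd.injective h2⟩
  · rintro ⟨rfl, rfl⟩; rfl

lemma eq_el (g : BeauvilleGroup p n n lam h) :
    g = el p n lam h (toAdd g.left) (toAdd g.right) := rfl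

lemma Uu_add (x y : ZMod (p^n)) :
    Uu p n lam h (x + y) = Uu p n lam h x * Uu p n lam h y := by
  unfold Uu
  rw [← map_mul]
  rfl

lemma Uu_nsmul (m : ℕ) (x : ZMod (p^n)) :
    Uu p n lam h ((m : ZMod (p^n)) * x) = (Uu p n lam h x) ^ m := by
  induction m with
  | zero =>
    simp only [Nat.cast_zero, zero_mul, pow_zero]
    exact map_one (zmodUnitHom p n n lam h)
  | succ k ih =>
    push_cast
    rw [add_mul, one_mul, Uu_add, ih, pow_succ]

lemma Uu_one_eq : Uu p n lam h 1 = lam := by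
  have h1 : (1 : ZMod (p^n)) = ((1 : ℤ) : ZMod (p^n)) := by norm_cast
  unfold Uu zmodUnitHom
  simp only [AddMonoidHom.coe_toMultiplicativeLeft, Function.comp_apply, toAdd_ofAdd, h1,
    ZMod.lift_coe, zmultiplesHom_apply, one_zsmul]
  rfl

lemma Uu_eq (hpn : p^n ≠ 0) (x : ZMod (p^n)) : Uu p n lam h x = lam ^ x.val := by
  haveI : NeZero (p^n) := ⟨hpn⟩
  calc Uu p n lam h x = Uu p n lam h (((x.val : ℕ) : ZMod (p^n)) * 1) := by
        rw [mul_one, ZMod.natCast_rightInverse x]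
  _ = (Uu p n lam h 1) ^ x.val := Uu_nsmul p n lam h x.val 1
  _ = lam ^ x.val := by rw [Uu_one_eq]


/-- reduction mod p -/
def cp (hn : n ≠ 0) : ZMod (p^n) →+* ZMod p := ZMod.castHom (dvd_pow_self p hn) (ZMod p)

include h in
lemma cp_lam (hp : p.Prime) (hn : n ≠ 0) : cp p n hn (lam : ZMod (p^n)) = 1 := by
  haveI : Fact p.Prime := ⟨hp⟩
  set u : (ZMod p)ˣ := Units.map (cp p n hn).toMonoidHom lam with hu_def
  have hu : u ^ (p ^ n) = 1 := by
    rw [hu_def, ← map_pow]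
    rw [h, map_one]
  have h1 : orderOf u ∣ p ^ n := orderOf_dvd_of_pow_eq_one hu
  have h2 : orderOf u ∣ p - 1 := by
    have hc : Fintype.card (ZMod p)ˣ = p - 1 := ZMod.card_units p
    rw [← hc]
    exact orderOf_dvd_card
  have hnd : ¬ p ∣ (p - 1) := by
    intro hd
    have h3 : 0 < p - 1 := by have := hp.two_le; omega
    have := Nat.le_of_dvd h3 hd
    have := hp.two_le
    omega
  have hcop : Nat.Coprime (p ^ n) (p - 1) :=
    Nat.Coprime.pow_left n ((Nat.Prime.coprime_iff_not_dvd hp).mpr hnd)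
  have h4 : orderOf u ∣ 1 := by
    rw [← hcop]
    exact Nat.dvd_gcd h1 h2
  have h5 : u = 1 := orderOf_eq_one_iff.mp (Nat.dvd_one.mp h4)
  have h6 : (u : ZMod p) = 1 := by rw [h5]; rfl
  exact h6

include h in
lemma cp_Uu (hp : p.Prime) (hn : n ≠ 0) (x : ZMod (p^n)) :
    cp p n hn ((Uu p n lam h x : (ZMod (p^n))ˣ) : ZMod (p^n)) = 1 := by
  rw [Uu_eq p n lam h (pow_ne_zero n hp.ne_zero), Units.val_pow_eq_pow_val, map_pow,
    cp_lam p n lam h hp hn, one_pow]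

/-- integer lift of lam -/
def Lint : ℤ := (((lam : ZMod (p^n)).val : ℕ) : ℤ)

lemma Lint_cast (hp : p.Prime) : ((Lint p n lam : ℤ) : ZMod (p^n)) = (lam : ZMod (p^n)) := by
  haveI : NeZero (p^n) := ⟨pow_ne_zero n hp.ne_zero⟩
  rw [Lint, Int.cast_natCast]
  exact ZMod.natCast_rightInverse _


lemma val_cast_eq_cp (hp : p.Prime) (hn : n ≠ 0) (A : ZMod (p^n)) :
    ((A.val : ℕ) : ZMod p) = cp p n hn A := by
  haveI : NeZero (p^n) := ⟨pow_ne_zero n hp.ne_zero⟩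
  rw [ZMod.natCast_val]
  rfl

include h in
lemma cp_Lint (hp : p.Prime) (hn : n ≠ 0) : ((Lint p n lam : ℤ) : ZMod p) = 1 := by
  haveI : NeZero (p^n) := ⟨pow_ne_zero n hp.ne_zero⟩
  rw [Lint, Int.cast_natCast, val_cast_eq_cp p n hp hn]
  exact cp_lam p n lam h hp hn

include h in
lemma Lint_dvd (hp : p.Prime) (hn : n ≠ 0) : (p : ℤ) ∣ Lint p n lam - 1 := by
  rw [← ZMod.intCast_zmod_eq_zero_iff_dvd]
  push_cast
  rw [cp_Lint p n lam h hp hn]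
  ring

include h in
lemma Lint_pow_dvd (hp : p.Prime) (hn : n ≠ 0) (k : ℕ) :
    (p : ℤ) ∣ (Lint p n lam) ^ k - 1 := by
  have h1 : (1:ℤ) ≡ Lint p n lam [ZMOD p] :=
    Int.modEq_iff_dvd.mpr (Lint_dvd p n lam h hp hn)
  have h2 : (Lint p n lam) ^ k ≡ 1 ^ k [ZMOD p] := (h1.symm).pow k
  rw [one_pow] at h2
  exact Int.ModEq.dvd h2.symm

lemma Uu_val_int (hp : p.Prime) (x : ZMod (p^n)) :
    ((Uu p n lam h x : (ZMod (p^n))ˣ) : ZMod (p^n)) = (((Lint p n lam) ^ x.val : ℤ) : ZMod (p^n)) := by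
  rw [Uu_eq p n lam h (pow_ne_zero n hp.ne_zero), Units.val_pow_eq_pow_val]
  push_cast
  rw [Lint_cast p n lam hp]

lemma geom_sum_Uu (hp : p.Prime) (hodd : Odd p) (hn : n ≠ 0) (x : ZMod (p^n)) :
    (∑ i ∈ range (p^(n-1)), ((Uu p n lam h x : (ZMod (p^n))ˣ) : ZMod (p^n)) ^ i)
      = ((p^(n-1) : ℕ) : ZMod (p^n)) := by
  set μ : ℤ := (Lint p n lam) ^ x.val with hμdef
  have hμ : (p : ℤ) ∣ μ - 1 := Lint_pow_dvd p n lam h hp hn x.val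
  obtain ⟨-, ⟨k, hk⟩⟩ := int_key p hp hodd hμ (n-1)
  have hn1 : n - 1 + 1 = n := Nat.succ_pred_eq_of_pos (Nat.pos_of_ne_zero hn)
  rw [hn1] at hk
  have hcast : (∑ i ∈ range (p^(n-1)), ((Uu p n lam h x : (ZMod (p^n))ˣ) : ZMod (p^n)) ^ i)
      = (((∑ i ∈ range (p^(n-1)), μ ^ i : ℤ)) : ZMod (p^n)) := by
    rw [Uu_val_int p n lam h hp]
    norm_cast
  rw [hcast]
  have : (∑ i ∈ range (p^(n-1)), μ ^ i) = (p:ℤ)^(n-1) + (p:ℤ)^n * k := by linarith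
  rw [this]
  push_cast
  have : ((p:ZMod (p^n)))^n = ((p^n : ℕ) : ZMod (p^n)) := by push_cast; ring
  rw [this, ZMod.natCast_self]
  ring

lemma Uu_pow_eq_one (hp : p.Prime) (hodd : Odd p) (hn : n ≠ 0) (x : ZMod (p^n)) :
    (Uu p n lam h x) ^ (p^(n-1)) = 1 := by
  have hμ : (p : ℤ) ∣ (Lint p n lam) ^ x.val - 1 := Lint_pow_dvd p n lam h hp hn x.val
  obtain ⟨⟨k, hk⟩, -⟩ := int_key p hp hodd hμ (n-1)
  have hn1 : n - 1 + 1 = n := Nat.succ_pred_eq_of_pos (Nat.pos_of_ne_zero hn)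
  rw [hn1] at hk
  have h2 : (((Lint p n lam ^ x.val) ^ p ^ (n-1) : ℤ) : ZMod (p^n)) = 1 := by
    have h4 : ((Lint p n lam ^ x.val) ^ p ^ (n-1) : ℤ) = 1 + (p:ℤ)^n * k := by linarith
    rw [h4]
    push_cast
    have h3 : ((p:ZMod (p^n)))^n = ((p^n : ℕ) : ZMod (p^n)) := by push_cast; ring
    rw [h3, ZMod.natCast_self]
    ring
  ext
  rw [Units.val_pow_eq_pow_val, Uu_val_int p n lam h hp, Units.val_one, ← h2]
  norm_cast

lemma isUnit_one_add_p_mul (hp : p.Prime) (hn : n ≠ 0) (w : ZMod (p^n)) :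
    IsUnit (1 + (p : ZMod (p^n)) * w) := by
  haveI : NeZero (p^n) := ⟨pow_ne_zero n hp.ne_zero⟩
  haveI : Fact (1 < p) := ⟨hp.one_lt⟩
  set s : ZMod (p^n) := 1 + (p : ZMod (p^n)) * w with hs_def
  have hcp : cp p n hn s = 1 := by
    rw [hs_def, map_add, map_one, map_mul, map_natCast, ZMod.natCast_self, zero_mul, add_zero]
  have hsval : ((s.val : ℕ) : ZMod (p^n)) = s := ZMod.natCast_rightInverse s
  have hnd : ¬ p ∣ s.val := by
    intro hd
    have h0 : (s.val : ZMod p) = 0 := (ZMod.natCast_eq_zero_iff _ _).mpr hd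
    rw [val_cast_eq_cp p n hp hn, hcp] at h0
    exact one_ne_zero h0
  have hcop : Nat.Coprime s.val (p^n) :=
    Nat.Coprime.pow_right n ((Nat.Prime.coprime_iff_not_dvd hp).mpr hnd).symm
  have := (ZMod.isUnit_iff_coprime s.val (p^n)).mpr hcop
  rwa [hsval] at this

lemma geom_p_Uu (hp : p.Prime) (hodd : Odd p) (hn : n ≠ 0) (x : ZMod (p^n)) :
    ∃ w : ZMod (p^n), IsUnit w ∧
      (∑ i ∈ range p, ((Uu p n lam h x : (ZMod (p^n))ˣ) : ZMod (p^n)) ^ i)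
        = (p : ZMod (p^n)) * w := by
  have hμ : (p : ℤ) ∣ (Lint p n lam) ^ x.val - 1 := Lint_pow_dvd p n lam h hp hn x.val
  obtain ⟨W, hW⟩ := int_key_p p hodd hμ
  refine ⟨1 + (p : ZMod (p^n)) * ((W : ℤ) : ZMod (p^n)), isUnit_one_add_p_mul p n hp hn _, ?_⟩
  have hcast : (∑ i ∈ range p, ((Uu p n lam h x : (ZMod (p^n))ˣ) : ZMod (p^n)) ^ i)
      = (((∑ i ∈ range p, ((Lint p n lam) ^ x.val) ^ i : ℤ)) : ZMod (p^n)) := by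
    rw [Uu_val_int p n lam h hp]
    norm_cast
  rw [hcast, hW]
  push_cast
  ring

lemma exists_p_mul (hp : p.Prime) (hn : n ≠ 0) (A : ZMod (p^n)) (hA : cp p n hn A = 0) :
    ∃ B, A = (p : ZMod (p^n)) * B := by
  haveI : NeZero (p^n) := ⟨pow_ne_zero n hp.ne_zero⟩
  have h1 : ((A.val : ℕ) : ZMod p) = 0 := by
    rw [val_cast_eq_cp p n hp hn]
    exact hA
  obtain ⟨t, ht⟩ := (ZMod.natCast_eq_zero_iff _ _).mp h1
  refine ⟨((t : ℕ) : ZMod (p^n)), ?_⟩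
  have : A = ((A.val : ℕ) : ZMod (p^n)) := (ZMod.natCast_rightInverse A).symm
  rw [this, ht]
  push_cast
  ring


lemma el_pow (a x : ZMod (p^n)) (m : ℕ) :
    (el p n lam h a x) ^ m
      = el p n lam h ((∑ i ∈ range m, ((Uu p n lam h x : (ZMod (p^n))ˣ) : ZMod (p^n)) ^ i) * a)
          ((m : ZMod (p^n)) * x) := by
  induction m with
  | zero =>
    rw [pow_zero]
    simp only [range_zero, sum_empty, zero_mul, Nat.cast_zero]
    rfl
  | succ k ih =>
    rw [pow_succ, ih, el_mul, el_eq_iff]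
    constructor
    · rw [Finset.sum_range_succ, add_mul]
      congr 1
      rw [Uu_nsmul p n lam h k x, Units.val_pow_eq_pow_val]
    · push_cast
      ring

def qh (hp : p.Prime) (hn : n ≠ 0) :
    BeauvilleGroup p n n lam h →* Multiplicative (ZMod p) × Multiplicative (ZMod p) where
  toFun g := (ofAdd (cp p n hn (toAdd g.left)), ofAdd (cp p n hn (toAdd g.right)))
  map_one' := by
    show (ofAdd (cp p n hn (toAdd ((1 : BeauvilleGroup p n n lam h).left))),
      ofAdd (cp p n hn (toAdd ((1 : BeauvilleGroup p n n lam h).right)))) = 1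
    have h1 : toAdd ((1 : BeauvilleGroup p n n lam h).left) = 0 := rfl
    have h2 : toAdd ((1 : BeauvilleGroup p n n lam h).right) = 0 := rfl
    rw [h1, h2, map_zero]
    rfl
  map_mul' g g' := by
    have h1 : toAdd ((g * g').left)
        = toAdd g.left + (Uu p n lam h (toAdd g.right) : ZMod (p^n)) * toAdd g'.left := rfl
    have h2 : toAdd ((g * g').right) = toAdd g.right + toAdd g'.right := rfl
    have h3 : cp p n hn (toAdd g.left + (Uu p n lam h (toAdd g.right) : ZMod (p^n)) * toAdd g'.left)
        = cp p n hn (toAdd g.left) + cp p n hn (toAdd g'.left) := by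
      rw [map_add, map_mul, cp_Uu p n lam h hp hn, one_mul]
    show (ofAdd (cp p n hn (toAdd ((g*g').left))), ofAdd (cp p n hn (toAdd ((g*g').right))))
        = (ofAdd (cp p n hn (toAdd g.left)) * ofAdd (cp p n hn (toAdd g'.left)),
           ofAdd (cp p n hn (toAdd g.right)) * ofAdd (cp p n hn (toAdd g'.right)))
    have h4 : cp p n hn (toAdd g.right + toAdd g'.right)
        = cp p n hn (toAdd g.right) + cp p n hn (toAdd g'.right) := map_add _ _ _
    rw [h1, h2, h3, h4, ofAdd_add, ofAdd_add]

lemma qh_el (hp : p.Prime) (hn : n ≠ 0) (a x : ZMod (p^n)) :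
    qh p n lam h hp hn (el p n lam h a x) = (ofAdd (cp p n hn a), ofAdd (cp p n hn x)) := rfl

lemma pow_pn1 (hp : p.Prime) (hodd : Odd p) (hn : n ≠ 0) (g : BeauvilleGroup p n n lam h) :
    g ^ (p^(n-1)) = el p n lam h (((p^(n-1) : ℕ) : ZMod (p^n)) * toAdd g.left)
      (((p^(n-1):ℕ) : ZMod (p^n)) * toAdd g.right) := by
  conv_lhs => rw [eq_el p n lam h g]
  rw [el_pow, geom_sum_Uu p n lam h hp hodd hn]

lemma coordzero_iff (hp : p.Prime) (hn : n ≠ 0) (C : ZMod (p^n)) :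
    ((p^(n-1):ℕ) : ZMod (p^n)) * C = 0 ↔ cp p n hn C = 0 := by
  haveI : NeZero (p^n) := ⟨pow_ne_zero n hp.ne_zero⟩
  have hn1 : n - 1 + 1 = n := Nat.succ_pred_eq_of_pos (Nat.pos_of_ne_zero hn)
  constructor
  · intro h0
    have hC : C = ((C.val : ℕ) : ZMod (p^n)) := (ZMod.natCast_rightInverse C).symm
    have h1 : (((p^(n-1) * C.val : ℕ)) : ZMod (p^n)) = 0 := by
      rw [Nat.cast_mul, ← hC]
      exact h0
    have h2 : p^n ∣ p^(n-1) * C.val := (ZMod.natCast_eq_zero_iff _ _).mp h1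
    have h2' : p^(n-1) * p ∣ p^(n-1) * C.val := by
      rw [← pow_succ, hn1]
      exact h2
    have h3 : p ∣ C.val := (Nat.mul_dvd_mul_iff_left (pow_pos hp.pos (n-1))).mp h2'
    have h4 := (ZMod.natCast_eq_zero_iff C.val p).mpr h3
    exact (val_cast_eq_cp p n hp hn C).symm.trans h4
  · intro h0
    obtain ⟨B, hB⟩ := exists_p_mul p n hp hn C h0
    rw [hB]
    have heq : ((p^(n-1):ℕ) : ZMod (p^n)) * ((p : ZMod (p^n)) * B) = ((p^n : ℕ) : ZMod (p^n)) * B := by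
      push_cast
      calc (p : ZMod (p^n))^(n-1) * ((p : ZMod (p^n)) * B)
          = ((p : ZMod (p^n))^(n-1) * (p : ZMod (p^n))) * B := by ring
        _ = (p : ZMod (p^n))^n * B := by rw [← pow_succ, hn1]
    rw [heq, ZMod.natCast_self, zero_mul]

lemma coordeq_iff (hp : p.Prime) (hn : n ≠ 0) (A B : ZMod (p^n)) :
    ((p^(n-1):ℕ) : ZMod (p^n)) * A = ((p^(n-1):ℕ) : ZMod (p^n)) * B ↔ cp p n hn A = cp p n hn B := by
  calc ((p^(n-1):ℕ) : ZMod (p^n)) * A = ((p^(n-1):ℕ) : ZMod (p^n)) * B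
      ↔ ((p^(n-1):ℕ) : ZMod (p^n)) * (A - B) = 0 := by rw [mul_sub, sub_eq_zero]
    _ ↔ cp p n hn (A - B) = 0 := coordzero_iff p n hp hn _
    _ ↔ cp p n hn A = cp p n hn B := by rw [map_sub, sub_eq_zero]

lemma qh_eq_iff (hp : p.Prime) (hodd : Odd p) (hn : n ≠ 0) (g g' : BeauvilleGroup p n n lam h) :
    qh p n lam h hp hn g = qh p n lam h hp hn g' ↔ g ^ (p^(n-1)) = g' ^ (p^(n-1)) := by
  rw [pow_pn1 p n lam h hp hodd hn, pow_pn1 p n lam h hp hodd hn, el_eq_iff,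
    coordeq_iff p n hp hn, coordeq_iff p n hp hn]
  constructor
  · intro hq
    exact ⟨ofAdd.injective (congrArg Prod.fst hq), ofAdd.injective (congrArg Prod.snd hq)⟩
  · rintro ⟨h1, h2⟩
    rw [eq_el p n lam h g, eq_el p n lam h g', qh_el, qh_el, h1, h2]

lemma pow_central (hp : p.Prime) (hodd : Odd p) (hn : n ≠ 0)
    (g k : BeauvilleGroup p n n lam h) :
    k * g ^ (p^(n-1)) * k⁻¹ = g ^ (p^(n-1)) := by
  rw [pow_pn1 p n lam h hp hodd hn]
  have hn1 : n - 1 + 1 = n := Nat.succ_pred_eq_of_pos (Nat.pos_of_ne_zero hn)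
  set P : ZMod (p^n) := ((p^(n-1):ℕ) : ZMod (p^n)) with hP
  have hpP : (p : ZMod (p^n)) * P = 0 := by
    have he : (p : ZMod (p^n)) * P = ((p * p^(n-1) : ℕ) : ZMod (p^n)) := by
      rw [hP]; push_cast; ring
    rw [he, ← pow_succ', hn1, ZMod.natCast_self]
  set A : ZMod (p^n) := P * toAdd g.left with hA
  set X : ZMod (p^n) := P * toAdd g.right with hX
  have hUX : Uu p n lam h X = 1 := by
    rw [hX, hP, Uu_nsmul p n lam h (p^(n-1)) (toAdd g.right)]
    exact Uu_pow_eq_one p n lam h hp hodd hn _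
  have hUA : ∀ y : ZMod (p^n), (Uu p n lam h y : ZMod (p^n)) * A = A := by
    intro y
    have hcpU : cp p n hn ((Uu p n lam h y : ZMod (p^n)) - 1) = 0 := by
      rw [map_sub, cp_Uu p n lam h hp hn, map_one, sub_self]
    obtain ⟨m, hm⟩ := exists_p_mul p n hp hn _ hcpU
    have hval : (Uu p n lam h y : ZMod (p^n)) = 1 + (p : ZMod (p^n)) * m := by
      linear_combination hm
    rw [hval, hA]
    have : (1 + (p : ZMod (p^n)) * m) * (P * toAdd g.left)
        = P * toAdd g.left + ((p : ZMod (p^n)) * P) * (m * toAdd g.left) := by ring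
    rw [this, hpP, zero_mul, add_zero]
  have hcomm : k * el p n lam h A X = el p n lam h A X * k := by
    conv_lhs => rw [eq_el p n lam h k]
    conv_rhs => rw [eq_el p n lam h k]
    rw [el_mul, el_mul, el_eq_iff]
    constructor
    · rw [hUX, hUA (toAdd k.right)]
      show toAdd k.left + A = A + (1 : (ZMod (p^n))ˣ) * toAdd k.left
      rw [Units.val_one, one_mul, add_comm]
    · exact add_comm _ _
  rw [hcomm, mul_inv_cancel_right]


/-! ### The target group V -/

section Vfacts

variable (q : ℕ)

local notation "V" => (Multiplicative (ZMod q) × Multiplicative (ZMod q))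

def e1 : Multiplicative (ZMod q) × Multiplicative (ZMod q) := (ofAdd 1, 1)
def e2 : Multiplicative (ZMod q) × Multiplicative (ZMod q) := (1, ofAdd 1)

lemma mult_pow_eq (c : Multiplicative (ZMod q)) (k : ℕ) : c ^ k = ofAdd ((k : ZMod q) * toAdd c) := by
  rw [← ofAdd_toAdd c, ← ofAdd_nsmul]
  rw [nsmul_eq_mul]
  rfl

lemma pair1_pow (c : ZMod q) (k : ℕ) :
    ((ofAdd c, 1) : V) ^ k = ((ofAdd ((k : ZMod q) * c), 1) : V) := by
  have h0 : ((ofAdd c, 1) : V) ^ k = ((ofAdd c) ^ k, (1 : Multiplicative (ZMod q)) ^ k) := rfl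
  rw [h0, one_pow, mult_pow_eq, toAdd_ofAdd]

lemma pair2_pow (c : ZMod q) (k : ℕ) :
    ((1, ofAdd c) : V) ^ k = ((1, ofAdd ((k : ZMod q) * c)) : V) := by
  have h0 : ((1, ofAdd c) : V) ^ k = ((1 : Multiplicative (ZMod q)) ^ k, (ofAdd c) ^ k) := rfl
  rw [h0, one_pow, mult_pow_eq, toAdd_ofAdd]

lemma e1_pow (hq : q ≠ 0) (c : ZMod q) : (e1 q) ^ c.val = ((ofAdd c, 1) : V) := by
  haveI : NeZero q := ⟨hq⟩
  rw [e1, pair1_pow, mul_one, ZMod.natCast_rightInverse]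

lemma e2_pow (hq : q ≠ 0) (c : ZMod q) : (e2 q) ^ c.val = ((1, ofAdd c) : V) := by
  haveI : NeZero q := ⟨hq⟩
  rw [e2, pair2_pow, mul_one, ZMod.natCast_rightInverse]

lemma V_pow_p (v : V) : v ^ q = 1 := by
  have hc : ∀ c : Multiplicative (ZMod q), c ^ q = 1 := by
    intro c
    rw [mult_pow_eq, ZMod.natCast_self, zero_mul]
    rfl
  have h0 : v ^ q = (v.1 ^ q, v.2 ^ q) := rfl
  rw [h0, hc, hc]
  rfl

lemma V_card (hq : q.Prime) : Nat.card V = q * q := by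
  haveI : NeZero q := ⟨hq.ne_zero⟩
  rw [Nat.card_prod]
  have hm : Nat.card (Multiplicative (ZMod q)) = q := by
    have he : Nat.card (Multiplicative (ZMod q)) = Nat.card (ZMod q) :=
      Nat.card_congr Multiplicative.toAdd
    rw [he, Nat.card_zmod]
  rw [hm]

lemma V_zpowers_ne_top (hq : q.Prime) (v : V) : Subgroup.zpowers v ≠ ⊤ := by
  intro htop
  have h1 : orderOf v = q * q := by
    rw [← Nat.card_zpowers, htop, ← V_card q hq]
    exact Subgroup.card_top
  have h2 : orderOf v ∣ q := orderOf_dvd_of_pow_eq_one (V_pow_p q v)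
  rw [h1] at h2
  have h3 := Nat.le_of_dvd hq.pos h2
  have := hq.two_le
  nlinarith

lemma V_repr (hq : q.Prime) (w : V) :
    w = (e1 q) ^ (toAdd w.1).val * (e2 q) ^ (toAdd w.2).val := by
  rw [e1_pow q hq.ne_zero, e2_pow q hq.ne_zero]
  have h0 : ((ofAdd (toAdd w.1), 1) : V) * ((1, ofAdd (toAdd w.2)) : V)
      = (ofAdd (toAdd w.1) * 1, 1 * ofAdd (toAdd w.2)) := rfl
  rw [h0, mul_one, one_mul, ofAdd_toAdd, ofAdd_toAdd]

lemma V_top_of_mem (hq : q.Prime) (H : Subgroup V) (h1 : e1 q ∈ H) (h2 : e2 q ∈ H) : H = ⊤ := by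
  rw [eq_top_iff]
  intro w _
  rw [V_repr q hq w]
  exact mul_mem (pow_mem h1 _) (pow_mem h2 _)

lemma V_isCoatom_e1 (hq : q.Prime) : IsCoatom (Subgroup.zpowers (e1 q)) := by
  haveI : NeZero q := ⟨hq.ne_zero⟩
  haveI : Fact q.Prime := ⟨hq⟩
  constructor
  · exact V_zpowers_ne_top q hq _
  · intro H hH
    obtain ⟨w, hwH, hwn⟩ := SetLike.exists_of_lt hH
    have hd : toAdd w.2 ≠ 0 := by
      intro h0
      apply hwn
      have hw := V_repr q hq w
      rw [h0, ZMod.val_zero, pow_zero, mul_one] at hw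
      rw [hw]
      exact Subgroup.pow_mem _ (Subgroup.mem_zpowers _) _
    have he1H : e1 q ∈ H := hH.le (Subgroup.mem_zpowers _)
    have hwd : ((1, ofAdd (toAdd w.2)) : V) ∈ H := by
      have hmem : ((e1 q) ^ (toAdd w.1).val)⁻¹ * w ∈ H :=
        mul_mem (inv_mem (pow_mem he1H _)) hwH
      have hw := V_repr q hq w
      have he : ((e1 q) ^ (toAdd w.1).val)⁻¹ * w = ((1, ofAdd (toAdd w.2)) : V) := by
        calc ((e1 q) ^ (toAdd w.1).val)⁻¹ * w
            = ((e1 q) ^ (toAdd w.1).val)⁻¹ * ((e1 q) ^ (toAdd w.1).val * (e2 q) ^ (toAdd w.2).val) := by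
              rw [← hw]
          _ = (e2 q) ^ (toAdd w.2).val := inv_mul_cancel_left _ _
          _ = ((1, ofAdd (toAdd w.2)) : V) := e2_pow q hq.ne_zero _
      exact he ▸ hmem
    have he2H : e2 q ∈ H := by
      have he : e2 q = ((1, ofAdd (toAdd w.2)) : V) ^ ((toAdd w.2)⁻¹).val := by
        rw [pair2_pow, ZMod.natCast_rightInverse, inv_mul_cancel₀ hd]
        rfl
      rw [he]
      exact pow_mem hwd _
    exact V_top_of_mem q hq H he1H he2H

lemma V_isCoatom_e2 (hq : q.Prime) : IsCoatom (Subgroup.zpowers (e2 q)) := by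
  haveI : NeZero q := ⟨hq.ne_zero⟩
  haveI : Fact q.Prime := ⟨hq⟩
  constructor
  · exact V_zpowers_ne_top q hq _
  · intro H hH
    obtain ⟨w, hwH, hwn⟩ := SetLike.exists_of_lt hH
    have hd : toAdd w.1 ≠ 0 := by
      intro h0
      apply hwn
      have hw := V_repr q hq w
      rw [h0, ZMod.val_zero, pow_zero, one_mul] at hw
      rw [hw]
      exact Subgroup.pow_mem _ (Subgroup.mem_zpowers _) _
    have he2H : e2 q ∈ H := hH.le (Subgroup.mem_zpowers _)
    have hwd : ((ofAdd (toAdd w.1), 1) : V) ∈ H := by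
      have hmem : w * ((e2 q) ^ (toAdd w.2).val)⁻¹ ∈ H :=
        mul_mem hwH (inv_mem (pow_mem he2H _))
      have hw := V_repr q hq w
      have he : w * ((e2 q) ^ (toAdd w.2).val)⁻¹ = ((ofAdd (toAdd w.1), 1) : V) := by
        calc w * ((e2 q) ^ (toAdd w.2).val)⁻¹
            = ((e1 q) ^ (toAdd w.1).val * (e2 q) ^ (toAdd w.2).val) * ((e2 q) ^ (toAdd w.2).val)⁻¹ := by
              rw [← hw]
          _ = (e1 q) ^ (toAdd w.1).val := mul_inv_cancel_right _ _
          _ = ((ofAdd (toAdd w.1), 1) : V) := e1_pow q hq.ne_zero _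
      exact he ▸ hmem
    have he1H : e1 q ∈ H := by
      have he : e1 q = ((ofAdd (toAdd w.1), 1) : V) ^ ((toAdd w.1)⁻¹).val := by
        rw [pair1_pow, ZMod.natCast_rightInverse, inv_mul_cancel₀ hd]
        rfl
      rw [he]
      exact pow_mem hwd _
    exact V_top_of_mem q hq H he1H he2H

lemma V_inf_bot (hq : q.Prime) :
    Subgroup.zpowers (e1 q) ⊓ Subgroup.zpowers (e2 q) = ⊥ := by
  rw [eq_bot_iff]
  rintro w ⟨⟨k, hk⟩, ⟨l, hl⟩⟩
  have h2 : w.2 = 1 := by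
    have := congrArg Prod.snd hk
    simpa [e1] using this.symm
  have h1 : w.1 = 1 := by
    have := congrArg Prod.fst hl
    simpa [e2] using this.symm
  have h0 : w = 1 := Prod.ext h1 h2
  simp [h0]

end Vfacts


/-! ### Group-level structure -/

lemma finite_BG (hp : p.Prime) : Finite (BeauvilleGroup p n n lam h) := by
  haveI : NeZero (p^n) := ⟨pow_ne_zero n hp.ne_zero⟩
  apply Finite.of_injective
    (fun g : BeauvilleGroup p n n lam h => ((g.left, g.right) : Multiplicative (ZMod (p^n)) × Multiplicative (ZMod (p^n))))
  intro g g' hgg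
  have h1 := congrArg Prod.fst hgg
  have h2 := congrArg Prod.snd hgg
  exact SemidirectProduct.ext h1 h2

lemma pow_pn_eq_one (hp : p.Prime) (hodd : Odd p) (hn : n ≠ 0) (g : BeauvilleGroup p n n lam h) :
    g ^ (p^n) = 1 := by
  have hn1 : n - 1 + 1 = n := Nat.succ_pred_eq_of_pos (Nat.pos_of_ne_zero hn)
  have h1 : g ^ (p^n) = (g^p)^(p^(n-1)) := by
    rw [← pow_mul]
    congr 1
    rw [← pow_succ', hn1]
  have h2 : qh p n lam h hp hn (g^p) = qh p n lam h hp hn 1 := by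
    rw [map_pow, map_one]
    exact V_pow_p p _
  have h3 := (qh_eq_iff p n lam h hp hodd hn (g^p) 1).mp h2
  rw [one_pow] at h3
  rw [h1, h3]

lemma isPGroup_BG (hp : p.Prime) (hodd : Odd p) (hn : n ≠ 0) :
    IsPGroup p (BeauvilleGroup p n n lam h) :=
  fun g => ⟨n, pow_pn_eq_one p n lam h hp hodd hn g⟩

lemma orderOf_eq_pn (hp : p.Prime) (hodd : Odd p) (hn : n ≠ 0)
    (u : BeauvilleGroup p n n lam h) (hu : qh p n lam h hp hn u ≠ 1) :
    orderOf u = p^n := by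
  have hdvd : orderOf u ∣ p^n := orderOf_dvd_of_pow_eq_one (pow_pn_eq_one p n lam h hp hodd hn u)
  obtain ⟨s, hs, horder⟩ := (Nat.dvd_prime_pow hp).mp hdvd
  by_contra hne
  have hslt : s < n := lt_of_le_of_ne hs (fun hcon => hne (by rw [horder, hcon]))
  have hdvd2 : orderOf u ∣ p^(n-1) := by
    rw [horder]
    exact pow_dvd_pow p (by omega)
  have hpow : u ^ (p^(n-1)) = 1 := orderOf_dvd_iff_pow_eq_one.mp hdvd2
  have : qh p n lam h hp hn u = qh p n lam h hp hn 1 := by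
    apply (qh_eq_iff p n lam h hp hodd hn u 1).mpr
    rw [hpow, one_pow]
  rw [map_one] at this
  exact hu this

lemma qh_surjective (hp : p.Prime) (hn : n ≠ 0) :
    Function.Surjective (qh p n lam h hp hn) := by
  haveI : NeZero p := ⟨hp.ne_zero⟩
  intro v
  refine ⟨el p n lam h (((toAdd v.1).val : ℕ) : ZMod (p^n)) (((toAdd v.2).val : ℕ) : ZMod (p^n)), ?_⟩
  rw [qh_el]
  have hc : ∀ c : ZMod p, cp p n hn (((c.val : ℕ) : ZMod (p^n))) = c := by
    intro c
    rw [map_natCast]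
    exact ZMod.natCast_rightInverse c
  rw [hc, hc, ofAdd_toAdd, ofAdd_toAdd]

lemma ker_pth_power (hp : p.Prime) (hodd : Odd p) (hn : n ≠ 0)
    (k : BeauvilleGroup p n n lam h) (hk : k ∈ (qh p n lam h hp hn).ker) :
    ∃ g : BeauvilleGroup p n n lam h, g ^ p = k := by
  rw [MonoidHom.mem_ker] at hk
  have h1 : cp p n hn (toAdd k.left) = 0 := by
    have := congrArg Prod.fst hk
    have h2 : ofAdd (cp p n hn (toAdd k.left)) = (1 : Multiplicative (ZMod p)) := this
    exact ofAdd.injective h2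
  have h2 : cp p n hn (toAdd k.right) = 0 := by
    have := congrArg Prod.snd hk
    have h3 : ofAdd (cp p n hn (toAdd k.right)) = (1 : Multiplicative (ZMod p)) := this
    exact ofAdd.injective h3
  obtain ⟨A₀, hA⟩ := exists_p_mul p n hp hn _ h1
  obtain ⟨X₀, hX⟩ := exists_p_mul p n hp hn _ h2
  obtain ⟨w, hwu, hw⟩ := geom_p_Uu p n lam h hp hodd hn X₀
  obtain ⟨W, hW⟩ := hwu
  refine ⟨el p n lam h ((W⁻¹ : (ZMod (p^n))ˣ) * A₀) X₀, ?_⟩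
  rw [el_pow, hw]
  have hcoord : (p : ZMod (p^n)) * w * ((W⁻¹ : (ZMod (p^n))ˣ) * A₀) = (p : ZMod (p^n)) * A₀ := by
    rw [← hW]
    have : (p : ZMod (p^n)) * (W : ZMod (p^n)) * ((W⁻¹ : (ZMod (p^n))ˣ) * A₀)
        = (p : ZMod (p^n)) * (((W * W⁻¹ : (ZMod (p^n))ˣ) : ZMod (p^n)) * A₀) := by
      push_cast
      ring
    rw [this, mul_inv_cancel, Units.val_one, one_mul]
  rw [hcoord, ← hA, ← hX]
  exact (eq_el p n lam h k).symm

lemma max_pow_mem (hp : p.Prime) (hodd : Odd p) (hn : n ≠ 0)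
    (M : Subgroup (BeauvilleGroup p n n lam h)) (hM : IsCoatom M)
    (y : BeauvilleGroup p n n lam h) : y ^ p ∈ M := by
  haveI : Fact p.Prime := ⟨hp⟩
  haveI := finite_BG p n lam h hp
  haveI : Group.IsNilpotent (BeauvilleGroup p n n lam h) :=
    (isPGroup_BG p n lam h hp hodd hn).isNilpotent
  haveI hnorm : M.Normal :=
    NormalizerCondition.normal_of_coatom M normalizerCondition_of_isNilpotent hM
  set π := QuotientGroup.mk' M with hπ
  -- subgroups of the quotient are ⊥ or ⊤
  have hsub : ∀ H : Subgroup (BeauvilleGroup p n n lam h ⧸ M), H = ⊥ ∨ H = ⊤ := by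
    intro H
    have hMH : M ≤ Subgroup.comap π H := by
      intro m hm
      have : π m = 1 := (QuotientGroup.eq_one_iff m).mpr hm
      show π m ∈ H
      rw [this]
      exact one_mem H
    rcases eq_or_lt_of_le hMH with heq | hlt
    · left
      have hH : H = Subgroup.map π (Subgroup.comap π H) :=
        (Subgroup.map_comap_eq_self_of_surjective (QuotientGroup.mk'_surjective M) H).symm
      rw [hH, ← heq]
      rw [eq_bot_iff]
      rintro x ⟨m, hm, rfl⟩
      simp only [Subgroup.mem_bot]
      exact (QuotientGroup.eq_one_iff m).mpr hm
    · right
      have htop : Subgroup.comap π H = ⊤ := hM.2 _ hlt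
      have hH : H = Subgroup.map π (Subgroup.comap π H) :=
        (Subgroup.map_comap_eq_self_of_surjective (QuotientGroup.mk'_surjective M) H).symm
      rw [hH, htop]
      exact Subgroup.map_top_of_surjective π (QuotientGroup.mk'_surjective M)
  have hgoal : (π y) ^ p = 1 → y ^ p ∈ M := by
    intro h1
    rw [← map_pow] at h1
    exact (QuotientGroup.eq_one_iff _).mp h1
  apply hgoal
  set w := π y with hw
  by_contra hne
  rcases hsub (Subgroup.zpowers (w ^ p)) with hbot | htop
  · exact hne (Subgroup.zpowers_eq_bot.mp hbot)
  · have hw1 : w ≠ 1 := by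
      intro h1
      apply hne
      rw [h1, one_pow]
    have hmemw : w ∈ Subgroup.zpowers (w ^ p) := htop ▸ Subgroup.mem_top w
    obtain ⟨k, hk⟩ := Subgroup.mem_zpowers_iff.mp hmemw
    have hzp : w ^ ((p : ℤ) * k - 1) = 1 := by
      rw [zpow_sub, zpow_one, zpow_mul, zpow_natCast, hk, mul_inv_cancel]
    have hdvd : (orderOf w : ℤ) ∣ (p : ℤ) * k - 1 := orderOf_dvd_iff_zpow_eq_one.mpr hzp
    have hQp : IsPGroup p (BeauvilleGroup p n n lam h ⧸ M) :=
      (isPGroup_BG p n lam h hp hodd hn).to_quotient M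
    obtain ⟨s, hs⟩ := hQp w
    obtain ⟨t, _, horder⟩ := (Nat.dvd_prime_pow hp).mp (orderOf_dvd_of_pow_eq_one hs)
    have ht1 : t ≠ 0 := by
      intro h0
      apply hw1
      apply orderOf_eq_one_iff.mp
      rw [horder, h0, pow_zero]
    have hpdvd : (p : ℤ) ∣ (orderOf w : ℤ) := by
      rw [horder]
      exact_mod_cast dvd_pow_self p ht1
    have hfin : (p : ℤ) ∣ 1 := by
      have h1 : (p : ℤ) ∣ (p : ℤ) * k - 1 := hpdvd.trans hdvd
      have h2 : (p : ℤ) ∣ (p : ℤ) * k := dvd_mul_right _ _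
      have h3 := dvd_sub h2 h1
      simpa using h3
    have h4 := Int.le_of_dvd one_pos hfin
    have := hp.two_le
    omega

lemma frattini_eq_ker (hp : p.Prime) (hodd : Odd p) (hn : n ≠ 0) :
    frattini (BeauvilleGroup p n n lam h) = (qh p n lam h hp hn).ker := by
  apply le_antisymm
  · have hco1 : IsCoatom (Subgroup.comap (qh p n lam h hp hn) (Subgroup.zpowers (e1 p))) :=
      Subgroup.isCoatom_comap_of_surjective (qh_surjective p n lam h hp hn) (V_isCoatom_e1 p hp)
    have hco2 : IsCoatom (Subgroup.comap (qh p n lam h hp hn) (Subgroup.zpowers (e2 p))) :=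
      Subgroup.isCoatom_comap_of_surjective (qh_surjective p n lam h hp hn) (V_isCoatom_e2 p hp)
    have hle : frattini (BeauvilleGroup p n n lam h)
        ≤ Subgroup.comap (qh p n lam h hp hn) (Subgroup.zpowers (e1 p))
          ⊓ Subgroup.comap (qh p n lam h hp hn) (Subgroup.zpowers (e2 p)) :=
      le_inf (frattini_le_coatom hco1) (frattini_le_coatom hco2)
    rwa [← Subgroup.comap_inf, V_inf_bot p hp, MonoidHom.comap_bot] at hle
  · rw [frattini, Order.radical]
    apply le_iInf
    intro M
    apply le_iInf
    intro hM
    intro k hk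
    obtain ⟨g, rfl⟩ := ker_pth_power p n lam h hp hodd hn k hk
    exact max_pow_mem p n lam h hp hodd hn M hM g


/-! ### Transfer between G and G/Φ(G) -/

lemma pi_eq_iff (hp : p.Prime) (hodd : Odd p) (hn : n ≠ 0)
    (w w' : BeauvilleGroup p n n lam h) :
    QuotientGroup.mk' (frattini (BeauvilleGroup p n n lam h)) w
      = QuotientGroup.mk' (frattini (BeauvilleGroup p n n lam h)) w'
      ↔ qh p n lam h hp hn w = qh p n lam h hp hn w' := by
  rw [QuotientGroup.mk'_apply, QuotientGroup.mk'_apply, QuotientGroup.eq,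
    frattini_eq_ker p n lam h hp hodd hn, MonoidHom.mem_ker, map_mul, map_inv, inv_mul_eq_one]

lemma pi_eq_one_iff (hp : p.Prime) (hodd : Odd p) (hn : n ≠ 0)
    (w : BeauvilleGroup p n n lam h) :
    QuotientGroup.mk' (frattini (BeauvilleGroup p n n lam h)) w = 1
      ↔ qh p n lam h hp hn w = 1 := by
  rw [QuotientGroup.mk'_apply, QuotientGroup.eq_one_iff,
    frattini_eq_ker p n lam h hp hodd hn, MonoidHom.mem_ker]

lemma cond3_forward (hp : p.Prime) (hodd : Odd p) (hn : n ≠ 0)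
    (u v : BeauvilleGroup p n n lam h)
    (hG : ∀ (g : BeauvilleGroup p n n lam h) (i j : ℤ), u^i = g * v^j * g⁻¹ → u^i = 1) :
    ∀ (g' : (BeauvilleGroup p n n lam h) ⧸ frattini (BeauvilleGroup p n n lam h)) (i j : ℤ),
      (QuotientGroup.mk' (frattini (BeauvilleGroup p n n lam h)) u)^i
        = g' * (QuotientGroup.mk' (frattini (BeauvilleGroup p n n lam h)) v)^j * g'⁻¹ →
      (QuotientGroup.mk' (frattini (BeauvilleGroup p n n lam h)) u)^i = 1 := by
  intro g' i j hrel
  set π := QuotientGroup.mk' (frattini (BeauvilleGroup p n n lam h)) with hπ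
  obtain ⟨g, rfl⟩ := QuotientGroup.mk'_surjective (frattini (BeauvilleGroup p n n lam h)) g'
  have h1 : π (u^i) = π (g * v^j * g⁻¹) := by
    rw [map_zpow, map_mul, map_mul, map_zpow, map_inv]
    exact hrel
  have h2 : qh p n lam h hp hn (u^i) = qh p n lam h hp hn (g * v^j * g⁻¹) :=
    (pi_eq_iff p n lam h hp hodd hn _ _).mp h1
  have h3 : qh p n lam h hp hn (u^i) = qh p n lam h hp hn (v^j) := by
    rw [h2, map_mul, map_mul, map_inv, mul_comm (qh p n lam h hp hn g), mul_inv_cancel_right]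
  have h4 : (u^i)^(p^(n-1)) = (v^j)^(p^(n-1)) :=
    (qh_eq_iff p n lam h hp hodd hn _ _).mp h3
  have h5 : u ^ (i * ((p^(n-1) : ℕ) : ℤ)) = v ^ (j * ((p^(n-1) : ℕ) : ℤ)) := by
    rw [zpow_mul, zpow_mul, zpow_natCast, zpow_natCast]
    exact h4
  have h6 : u ^ (i * ((p^(n-1) : ℕ) : ℤ)) = 1 := by
    apply hG 1 (i * ((p^(n-1) : ℕ) : ℤ)) (j * ((p^(n-1) : ℕ) : ℤ))
    rw [one_mul, inv_one, mul_one]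
    exact h5
  have h7 : (u^i)^(p^(n-1)) = (1 : BeauvilleGroup p n n lam h)^(p^(n-1)) := by
    rw [one_pow, ← zpow_natCast (u^i), ← zpow_mul]
    exact h6
  have h8 : qh p n lam h hp hn (u^i) = 1 := by
    have := (qh_eq_iff p n lam h hp hodd hn (u^i) 1).mpr h7
    rwa [map_one] at this
  have h9 : π (u^i) = 1 := (pi_eq_one_iff p n lam h hp hodd hn _).mpr h8
  rw [map_zpow] at h9
  exact h9

lemma qh_pow_ne_one (hp : p.Prime) (hn : n ≠ 0) (u : BeauvilleGroup p n n lam h)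
    (hu : qh p n lam h hp hn u ≠ 1) (ι : ℕ) (hι : ¬ p ∣ ι) :
    qh p n lam h hp hn (u ^ ι) ≠ 1 := by
  rw [map_pow]
  intro h1
  have hord : orderOf (qh p n lam h hp hn u) = p := by
    rcases (Nat.dvd_prime hp).mp
        (orderOf_dvd_of_pow_eq_one (V_pow_p p (qh p n lam h hp hn u))) with h2 | h2
    · exact absurd (orderOf_eq_one_iff.mp h2) hu
    · exact h2
  have := orderOf_dvd_of_pow_eq_one h1
  rw [hord] at this
  exact hι this

lemma cond3_backward (hp : p.Prime) (hodd : Odd p) (hn : n ≠ 0)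
    (u v : BeauvilleGroup p n n lam h)
    (hu : qh p n lam h hp hn u ≠ 1) (hv : qh p n lam h hp hn v ≠ 1)
    (hQ : ∀ (g' : (BeauvilleGroup p n n lam h) ⧸ frattini (BeauvilleGroup p n n lam h)) (i j : ℤ),
      (QuotientGroup.mk' (frattini (BeauvilleGroup p n n lam h)) u)^i
        = g' * (QuotientGroup.mk' (frattini (BeauvilleGroup p n n lam h)) v)^j * g'⁻¹ →
      (QuotientGroup.mk' (frattini (BeauvilleGroup p n n lam h)) u)^i = 1) :
    ∀ (g : BeauvilleGroup p n n lam h) (i j : ℤ), u^i = g * v^j * g⁻¹ → u^i = 1 := by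
  intro g i j hrel
  have hn1 : n - 1 + 1 = n := Nat.succ_pred_eq_of_pos (Nat.pos_of_ne_zero hn)
  set π := QuotientGroup.mk' (frattini (BeauvilleGroup p n n lam h)) with hπ
  have hordv : orderOf v = p^n := orderOf_eq_pn p n lam h hp hodd hn v hv
  set pn : ℤ := ((p^n : ℕ) : ℤ) with hpn
  have hpnpos : (0 : ℤ) < pn := by
    rw [hpn]
    exact_mod_cast pow_pos hp.pos n
  have hupn : u ^ pn = 1 := by
    rw [hpn, zpow_natCast]
    exact pow_pn_eq_one p n lam h hp hodd hn u
  have hiemod : u ^ i = u ^ (i % pn) := by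
    conv_lhs => rw [← Int.emod_add_mul_ediv i pn]
    rw [zpow_add, zpow_mul, hupn, one_zpow, mul_one]
  by_cases hi0 : i % pn = 0
  · rw [hiemod, hi0, zpow_zero]
  · exfalso
    have hge : 0 ≤ i % pn := Int.emod_nonneg i (ne_of_gt hpnpos)
    have hlt : i % pn < pn := Int.emod_lt_of_pos i hpnpos
    set iN : ℕ := (i % pn).toNat with hiNdef
    have hiNeq : (iN : ℤ) = i % pn := Int.toNat_of_nonneg hge
    have hiNlt : iN < p^n := by
      have : (iN : ℤ) < ((p^n : ℕ) : ℤ) := by rw [hiNeq]; exact hlt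
      exact_mod_cast this
    have hiN0 : iN ≠ 0 := by
      intro h0
      apply hi0
      rw [← hiNeq, h0]
      rfl
    have hipow : u ^ i = u ^ iN := by
      rw [hiemod, ← zpow_natCast u iN, hiNeq]
    set k := iN.factorization p with hkdef
    set ι := iN / p ^ k with hιdef
    have hfact : p ^ k * ι = iN := Nat.ordProj_mul_ordCompl_eq_self iN p
    have hιnd : ¬ p ∣ ι := Nat.not_dvd_ordCompl hp hiN0
    have hklt : k ≤ n - 1 := by
      have hdvd : p ^ k ∣ iN := Nat.ordProj_dvd iN p
      have hle : p ^ k ≤ iN := Nat.le_of_dvd (Nat.pos_of_ne_zero hiN0) hdvd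
      have hlt2 : p ^ k < p ^ n := lt_of_le_of_lt hle hiNlt
      have hkn : k < n := by
        by_contra hc
        push_neg at hc
        exact absurd (Nat.pow_le_pow_right hp.one_lt.le hc) (not_le.mpr hlt2)
      omega
    have hrel2 : (u : BeauvilleGroup p n n lam h) ^ iN = g * v^j * g⁻¹ := by
      rw [← hipow]
      exact hrel
    -- raise to the power p^(n-1-k)
    have hexp : iN * p^(n-1-k) = ι * p^(n-1) := by
      rw [← hfact]
      calc (p^k * ι) * p^(n-1-k) = ι * (p^k * p^(n-1-k)) := by ring
        _ = ι * p^(n-1) := by rw [← pow_add, show k + (n-1-k) = n-1 by omega]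
    have hL : ((u : BeauvilleGroup p n n lam h) ^ iN) ^ (p^(n-1-k)) = (u^ι)^(p^(n-1)) := by
      rw [← pow_mul, ← pow_mul, hexp]
    have hR : (u^ι)^(p^(n-1)) = g * (v^j)^(p^(n-1-k)) * g⁻¹ := by
      rw [← hL, hrel2, conj_pow]
    set e : ℤ := j * ((p ^ (n-1-k) : ℕ) : ℤ) with hedef
    have hWeq : (v ^ j) ^ (p ^ (n-1-k)) = v ^ e := by
      rw [hedef, zpow_mul, zpow_natCast]
    have hRe : (u^ι)^(p^(n-1)) = g * v ^ e * g⁻¹ := by rw [hR, hWeq]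
    have hXp : ((u^ι)^(p^(n-1)))^p = 1 := by
      rw [← pow_mul, ← pow_succ, hn1]
      exact pow_pn_eq_one p n lam h hp hodd hn _
    have hconjp : g * (v^e)^p * g⁻¹ = 1 := by
      rw [← conj_pow, ← hRe]
      exact hXp
    have hWp : (v ^ e) ^ p = 1 := by
      have h1 : (v^e)^p = g⁻¹ * (g * (v^e)^p * g⁻¹) * g := by group
      rw [h1, hconjp, mul_one, inv_mul_cancel]
    have hdvd : ((p^n : ℕ) : ℤ) ∣ e * p := by
      have h1 : v ^ (e * (p : ℤ)) = 1 := by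
        rw [zpow_mul, zpow_natCast]
        exact hWp
      have h2 := orderOf_dvd_iff_zpow_eq_one.mpr h1
      rwa [hordv] at h2
    obtain ⟨t, ht⟩ : ∃ t : ℤ, e = ((p^(n-1) : ℕ) : ℤ) * t := by
      obtain ⟨c, hc⟩ := hdvd
      refine ⟨c, ?_⟩
      have hpn' : ((p^n : ℕ) : ℤ) = ((p^(n-1) : ℕ) : ℤ) * (p : ℤ) := by
        push_cast
        rw [← pow_succ, hn1]
      apply mul_right_cancel₀ (show (p : ℤ) ≠ 0 by exact_mod_cast hp.ne_zero)
      rw [hc, hpn']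
      ring
    have hve : v ^ e = (v^t)^(p^(n-1)) := by
      rw [ht, mul_comm, zpow_mul, zpow_natCast]
    have hcent := pow_central p n lam h hp hodd hn (v^t) g
    have hfinal : (u^ι)^(p^(n-1)) = (v^t)^(p^(n-1)) := by
      rw [hRe, hve, hcent]
    have hq : qh p n lam h hp hn (u^ι) = qh p n lam h hp hn (v^t) :=
      (qh_eq_iff p n lam h hp hodd hn _ _).mpr hfinal
    have hπeq : π (u ^ (ι : ℤ)) = π (v ^ t) := by
      have h1 : qh p n lam h hp hn (u ^ (ι : ℤ)) = qh p n lam h hp hn (v^t) := by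
        rw [zpow_natCast]
        exact hq
      exact (pi_eq_iff p n lam h hp hodd hn _ _).mpr h1
    have happ : (π u) ^ (ι : ℤ) = 1 := by
      apply hQ 1 (ι : ℤ) t
      rw [one_mul, inv_one, mul_one, ← map_zpow, ← map_zpow]
      exact hπeq
    rw [← map_zpow] at happ
    have hker : qh p n lam h hp hn (u ^ (ι : ℤ)) = 1 :=
      (pi_eq_one_iff p n lam h hp hodd hn _).mp happ
    rw [zpow_natCast] at hker
    exact qh_pow_ne_one p n lam h hp hn u hu ι hιnd hker


lemma V_ne_one {q : ℕ} (hq : q.Prime) (α β γ : Multiplicative (ZMod q) × Multiplicative (ZMod q))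
    (hprod : α * β * γ = 1)
    (hgen : Subgroup.closure {α, β, γ} = ⊤) : α ≠ 1 ∧ β ≠ 1 ∧ γ ≠ 1 := by
  refine ⟨?_, ?_, ?_⟩
  · intro h1
    have hβγ : γ = β⁻¹ := by
      rw [h1, one_mul] at hprod
      exact eq_inv_of_mul_eq_one_right (by rw [← hprod])
    have hle : Subgroup.closure {α, β, γ} ≤ Subgroup.zpowers β := by
      apply Subgroup.closure_le _ |>.mpr
      rintro w (rfl | rfl | rfl)
      · rw [h1]; exact one_mem _
      · exact Subgroup.mem_zpowers _
      · rw [hβγ]; exact inv_mem (Subgroup.mem_zpowers _)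
    rw [hgen] at hle
    exact V_zpowers_ne_top q hq β (top_le_iff.mp hle)
  · intro h1
    have hαγ : γ = α⁻¹ := by
      rw [h1, mul_one] at hprod
      exact eq_inv_of_mul_eq_one_right (by rw [← hprod])
    have hle : Subgroup.closure {α, β, γ} ≤ Subgroup.zpowers α := by
      apply Subgroup.closure_le _ |>.mpr
      rintro w (rfl | rfl | rfl)
      · exact Subgroup.mem_zpowers _
      · rw [h1]; exact one_mem _
      · rw [hαγ]; exact inv_mem (Subgroup.mem_zpowers _)
    rw [hgen] at hle
    exact V_zpowers_ne_top q hq α (top_le_iff.mp hle)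
  · intro h1
    have hβα : β = α⁻¹ := by
      rw [h1, mul_one] at hprod
      exact eq_inv_of_mul_eq_one_right (by rw [← hprod])
      -- hprod : α * β = 1 → β = α⁻¹
    have hle : Subgroup.closure {α, β, γ} ≤ Subgroup.zpowers α := by
      apply Subgroup.closure_le _ |>.mpr
      rintro w (rfl | rfl | rfl)
      · exact Subgroup.mem_zpowers _
      · rw [hβα]; exact inv_mem (Subgroup.mem_zpowers _)
      · rw [h1]; exact one_mem _
    rw [hgen] at hle
    exact V_zpowers_ne_top q hq α (top_le_iff.mp hle)

lemma image_triple {G H : Type*} [Group G] [Group H] (f : G →* H) (x y z : G) :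
    f '' ({x, y, z} : Set G) = ({f x, f y, f z} : Set H) := by
  simp [Set.image_insert_eq]

lemma gen_forward {G H : Type*} [Group G] [Group H] (f : G →* H)
    (hf : Function.Surjective f) (x y z : G)
    (hgen : Subgroup.closure ({x, y, z} : Set G) = ⊤) :
    Subgroup.closure ({f x, f y, f z} : Set H) = ⊤ := by
  rw [← image_triple f x y z, ← MonoidHom.map_closure, hgen]
  exact Subgroup.map_top_of_surjective f hf

lemma gen_backward (hp : p.Prime) (hodd : Odd p) (hn : n ≠ 0)
    (x y z : BeauvilleGroup p n n lam h)
    (hgen : Subgroup.closure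
        ({QuotientGroup.mk' (frattini (BeauvilleGroup p n n lam h)) x,
          QuotientGroup.mk' (frattini (BeauvilleGroup p n n lam h)) y,
          QuotientGroup.mk' (frattini (BeauvilleGroup p n n lam h)) z} :
          Set ((BeauvilleGroup p n n lam h) ⧸ frattini (BeauvilleGroup p n n lam h))) = ⊤) :
    Subgroup.closure ({x, y, z} : Set (BeauvilleGroup p n n lam h)) = ⊤ := by
  haveI := finite_BG p n lam h hp
  haveI : Finite (Subgroup (BeauvilleGroup p n n lam h)) :=
    Finite.of_injective (fun H : Subgroup (BeauvilleGroup p n n lam h) => (H : Set (BeauvilleGroup p n n lam h)))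
      SetLike.coe_injective
  set π := QuotientGroup.mk' (frattini (BeauvilleGroup p n n lam h)) with hπ
  have h1 : Subgroup.map π (Subgroup.closure ({x, y, z} : Set (BeauvilleGroup p n n lam h))) = ⊤ := by
    rw [MonoidHom.map_closure, image_triple]
    exact hgen
  have h2 : Subgroup.closure ({x, y, z} : Set (BeauvilleGroup p n n lam h)) ⊔ π.ker = ⊤ := by
    rw [← Subgroup.comap_map_eq, h1, Subgroup.comap_top]
  rw [hπ, QuotientGroup.ker_mk'] at h2
  exact frattini_nongenerating h2

lemma qh_ne_one_triple (hp : p.Prime) (hodd : Odd p) (hn : n ≠ 0)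
    (x y z : BeauvilleGroup p n n lam h) (hxyz : x * y * z = 1)
    (hgen : Subgroup.closure ({x, y, z} : Set (BeauvilleGroup p n n lam h)) = ⊤) :
    qh p n lam h hp hn x ≠ 1 ∧ qh p n lam h hp hn y ≠ 1 ∧ qh p n lam h hp hn z ≠ 1 := by
  have hmap := gen_forward (qh p n lam h hp hn) (qh_surjective p n lam h hp hn) x y z hgen
  have hprod : qh p n lam h hp hn x * qh p n lam h hp hn y * qh p n lam h hp hn z = 1 := by
    rw [← map_mul, ← map_mul, hxyz, map_one]
  exact V_ne_one hp _ _ _ hprod hmap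

end BeauvilleAux

/-- For `G = G(λ,n,n)`, odd `p`, a pair of triples with product one is an
unmixed Beauville structure on `G` if and only if its image under the quotient map by the
Frattini subgroup is an unmixed Beauville structure on `G/Φ(G)`. -/
theorem beauville_iff_beauville_frattini_quotient
    (p n : ℕ) (hp : p.Prime) (hodd : Odd p) (hn : 1 ≤ n)
    (lam : (ZMod (p ^ n))ˣ) (h : lam ^ (p ^ n) = 1)
    (x y z a b c : BeauvilleGroup p n n lam h)
    (hxyz : x * y * z = 1) (habc : a * b * c = 1) :
    IsBeauvilleStructure x y z a b c ↔
      IsBeauvilleStructure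
        (QuotientGroup.mk' (frattini (BeauvilleGroup p n n lam h)) x)
        (QuotientGroup.mk' (frattini (BeauvilleGroup p n n lam h)) y)
        (QuotientGroup.mk' (frattini (BeauvilleGroup p n n lam h)) z)
        (QuotientGroup.mk' (frattini (BeauvilleGroup p n n lam h)) a)
        (QuotientGroup.mk' (frattini (BeauvilleGroup p n n lam h)) b)
        (QuotientGroup.mk' (frattini (BeauvilleGroup p n n lam h)) c) := by
  have hn' : n ≠ 0 := by omega
  set π := QuotientGroup.mk' (frattini (BeauvilleGroup p n n lam h)) with hπdef
  constructor
  · rintro ⟨h1, h2, h3, h4, h5⟩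
    refine ⟨by rw [← map_mul, ← map_mul, h1, map_one],
      by rw [← map_mul, ← map_mul, h2, map_one],
      BeauvilleAux.gen_forward π (QuotientGroup.mk'_surjective _) x y z h3,
      BeauvilleAux.gen_forward π (QuotientGroup.mk'_surjective _) a b c h4, ?_⟩
    intro u' hu' v' hv' g' i j hrel
    simp only [Set.mem_insert_iff, Set.mem_singleton_iff] at hu' hv'
    have hex1 : ∃ u ∈ ({x, y, z} : Set (BeauvilleGroup p n n lam h)), π u = u' := by
      rcases hu' with rfl | rfl | rfl
      · exact ⟨x, by simp, rfl⟩
      · exact ⟨y, by simp, rfl⟩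
      · exact ⟨z, by simp, rfl⟩
    have hex2 : ∃ v ∈ ({a, b, c} : Set (BeauvilleGroup p n n lam h)), π v = v' := by
      rcases hv' with rfl | rfl | rfl
      · exact ⟨a, by simp, rfl⟩
      · exact ⟨b, by simp, rfl⟩
      · exact ⟨c, by simp, rfl⟩
    obtain ⟨u, hu, rfl⟩ := hex1
    obtain ⟨v, hv, rfl⟩ := hex2
    exact BeauvilleAux.cond3_forward p n lam h hp hodd hn' u v
      (fun g i j => h5 u hu v hv g i j) g' i j hrel
  · rintro ⟨h1, h2, h3, h4, h5⟩
    have hg1 : Subgroup.closure ({x, y, z} : Set (BeauvilleGroup p n n lam h)) = ⊤ :=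
      BeauvilleAux.gen_backward p n lam h hp hodd hn' x y z h3
    have hg2 : Subgroup.closure ({a, b, c} : Set (BeauvilleGroup p n n lam h)) = ⊤ :=
      BeauvilleAux.gen_backward p n lam h hp hodd hn' a b c h4
    obtain ⟨hqx, hqy, hqz⟩ :=
      BeauvilleAux.qh_ne_one_triple p n lam h hp hodd hn' x y z hxyz hg1
    obtain ⟨hqa, hqb, hqc⟩ :=
      BeauvilleAux.qh_ne_one_triple p n lam h hp hodd hn' a b c habc hg2
    refine ⟨hxyz, habc, hg1, hg2, ?_⟩
    intro u hu v hv g i j hrel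
    simp only [Set.mem_insert_iff, Set.mem_singleton_iff] at hu hv
    have hqu : BeauvilleAux.qh p n lam h hp hn' u ≠ 1 := by
      rcases hu with rfl | rfl | rfl <;> assumption
    have hqv : BeauvilleAux.qh p n lam h hp hn' v ≠ 1 := by
      rcases hv with rfl | rfl | rfl <;> assumption
    have hmemu : π u ∈ ({π x, π y, π z} :
        Set ((BeauvilleGroup p n n lam h) ⧸ frattini (BeauvilleGroup p n n lam h))) := by
      rcases hu with rfl | rfl | rfl <;> simp
    have hmemv : π v ∈ ({π a, π b, π c} :
        Set ((BeauvilleGroup p n n lam h) ⧸ frattini (BeauvilleGroup p n n lam h))) := by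
      rcases hv with rfl | rfl | rfl <;> simp
    exact BeauvilleAux.cond3_backward p n lam h hp hodd hn' u v hqu hqv
      (fun g' i j hr => h5 (π u) hmemu (π v) hmemv g' i j hr) g i j hrel
end
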